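/- arXiv:0807.0926 — 4 statements merged into one kernel-verified Lean document; each statement's English description precedes it below -/
import Mathlib

section
/- Let (ℂ_n)_{n∈ℤ} be a filtration of partitions of a σ-finite measure space Ω with μ(Ω) = ∞ and regularity constant N₀. Suppose 0 ≤ u ≤ v are integrable and g ≥ 0 is measurable, and for every n ∈ ℤ and every C ∈ ℂ_n one has ∫_C (u - v_C)_+ dμ ≤ ∫_C g dμ. Then for every λ > 0, μ({x : u(x) ≥ λ}) ≤ (2/λ) ∫_Ω g(x) 1_{Mv(x) > λ/(2N₀)} dμ(x), where Mv = sup_n v_{|n} is the maximal function relative to the filtration. -/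
open MeasureTheory Filter
open scoped ENNReal Topology

/-- A filtration of partitions of a measure space `Ω`, with regularity constant `N₀`.
`part n` is the partition `ℂ_n`, consisting of countably many disjoint measurable sets
of finite positive measure; `elem n x` is the element `C_n(x)` of `ℂ_n` containing `x`.
The partitions are nested, a parent has measure at most `N₀` times that of a child,
the elements become large as `n → -∞`, and the averages over `C_n(x)` converge a.e.
to the function as `n → ∞`. -/
structure FiltrationOfPartitions (Ω : Type) [MeasurableSpace Ω] (μ : Measure Ω)
    (N₀ : ℝ) where
  part : ℤ → Set (Set Ω)
  countable : ∀ n, (part n).Countable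
  meas : ∀ n, ∀ C ∈ part n, MeasurableSet C
  finite : ∀ n, ∀ C ∈ part n, μ C < ⊤
  pos : ∀ n, ∀ C ∈ part n, 0 < μ C
  disj : ∀ n, (part n).PairwiseDisjoint id
  elem : ℤ → Ω → Set Ω
  elem_mem : ∀ n x, elem n x ∈ part n ∧ x ∈ elem n x
  nested : ∀ n x, elem n x ⊆ elem (n - 1) x
  reg : ∀ n x, μ (elem (n - 1) x) ≤ ENNReal.ofReal N₀ * μ (elem n x)
  large : ∀ M : ℝ, ∃ m : ℤ, ∀ n : ℤ, n ≤ m → ∀ C ∈ part n, ENNReal.ofReal M ≤ μ C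
  conv : ∀ f : Ω → ℝ, Integrable f μ →
    ∀ᵐ x ∂μ, Tendsto (fun n : ℤ => ⨍ y in elem n x, f y ∂μ) atTop (𝓝 (f x))

/-- The maximal function `Mv = sup_n v_{|n}` relative to a filtration of partitions. -/
noncomputable def FiltrationOfPartitions.maximal {Ω : Type} [MeasurableSpace Ω]
    {μ : Measure Ω} {N₀ : ℝ} (F : FiltrationOfPartitions Ω μ N₀) (v : Ω → ℝ)
    (x : Ω) : ℝ≥0∞ :=
  ⨆ n : ℤ, ENNReal.ofReal (⨍ y in F.elem n x, v y ∂μ)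

lemma FiltrationOfPartitions.elem_eq_of_mem {Ω : Type} [MeasurableSpace Ω] {μ : Measure Ω}
    {N₀ : ℝ} (F : FiltrationOfPartitions Ω μ N₀) {n : ℤ} {x y : Ω}
    (hy : y ∈ F.elem n x) : F.elem n y = F.elem n x :=
  (F.disj n).elim (F.elem_mem n y).1 (F.elem_mem n x).1
    (fun hd => Set.not_disjoint_iff.2 ⟨y, (F.elem_mem n y).2, hy⟩ hd)

lemma FiltrationOfPartitions.elem_subset {Ω : Type} [MeasurableSpace Ω] {μ : Measure Ω}
    {N₀ : ℝ} (F : FiltrationOfPartitions Ω μ N₀) {m n : ℤ} (h : m ≤ n) (x : Ω) :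
    F.elem n x ⊆ F.elem m x := by
  refine Int.le_induction (motive := fun k _ => F.elem k x ⊆ F.elem m x) subset_rfl ?_ n h
  intro k _ ih
  exact Set.Subset.trans (by simpa using F.nested (k + 1) x) ih

theorem stmt3 {Ω : Type} [MeasurableSpace Ω] (μ : Measure Ω) [SigmaFinite μ]
    (hμ : μ Set.univ = ⊤) (N₀ : ℝ) (hN₀ : 1 ≤ N₀)
    (F : FiltrationOfPartitions Ω μ N₀) (u v g : Ω → ℝ)
    (hu : Integrable u μ) (hv : Integrable v μ)
    (hg0 : ∀ x, 0 ≤ g x) (hgm : Measurable g)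
    (h0u : ∀ x, 0 ≤ u x) (huv : ∀ x, u x ≤ v x)
    (hmain : ∀ n : ℤ, ∀ C ∈ F.part n,
      ∫ x in C, max (u x - ⨍ y in C, v y ∂μ) 0 ∂μ ≤ ∫ x in C, g x ∂μ)
    (lam : ℝ) (hlam : 0 < lam) :
    μ {x | lam ≤ u x} ≤ ENNReal.ofReal (2 / lam) *
      ∫⁻ x in {x | ENNReal.ofReal (lam / (2 * N₀)) < F.maximal v x},
        ENNReal.ofReal (g x) ∂μ := by
  classical
  have hN0pos : (0:ℝ) < N₀ := lt_of_lt_of_le one_pos hN₀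
  set t : ℝ := lam / (2 * N₀) with ht_def
  have ht_pos : 0 < t := div_pos hlam (by positivity)
  have ht_lt : t < lam := by
    rw [ht_def, div_lt_iff₀ (by positivity)]
    nlinarith
  have hNt : N₀ * t = lam / 2 := by
    rw [ht_def]; field_simp
  have h0v : ∀ x, 0 ≤ v x := fun x => (h0u x).trans (huv x)
  set A : ℤ → Ω → ℝ := fun n x => ⨍ y in F.elem n x, v y ∂μ with hA
  set E : Set Ω := {x | ENNReal.ofReal t < F.maximal v x} with hE
  -- basic facts about cells
  have hCmem : ∀ (n : ℤ) (x : Ω), F.elem n x ∈ F.part n := fun n x => (F.elem_mem n x).1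
  have hCmeas : ∀ (n : ℤ) (x : Ω), MeasurableSet (F.elem n x) :=
    fun n x => F.meas n _ (hCmem n x)
  have hCfin : ∀ (n : ℤ) (x : Ω), μ (F.elem n x) < ⊤ := fun n x => F.finite n _ (hCmem n x)
  have hCpos : ∀ (n : ℤ) (x : Ω), 0 < (μ (F.elem n x)).toReal :=
    fun n x => ENNReal.toReal_pos (F.pos n _ (hCmem n x)).ne' (hCfin n x).ne
  -- averages are uniformly small for very negative n
  obtain ⟨m₀, hm₀⟩ := F.large ((∫ y, |v y| ∂μ) / t + 1)
  have hsmall : ∀ n : ℤ, n ≤ m₀ → ∀ x, A n x ≤ t := by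
    intro n hn x
    have hM := hm₀ n hn _ (hCmem n x)
    set I := ∫ y, |v y| ∂μ with hI
    have hI0 : 0 ≤ I := integral_nonneg fun y => abs_nonneg _
    have hMpos : (0:ℝ) < I / t + 1 := by positivity
    have hμ1 : I / t + 1 ≤ (μ (F.elem n x)).toReal := by
      have h2 := ENNReal.toReal_mono (hCfin n x).ne hM
      rwa [ENNReal.toReal_ofReal hMpos.le] at h2
    have hint : ∫ y in F.elem n x, v y ∂μ ≤ I := by
      calc ∫ y in F.elem n x, v y ∂μ ≤ ∫ y in F.elem n x, |v y| ∂μ :=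
            setIntegral_mono hv.integrableOn hv.abs.integrableOn fun y => le_abs_self _
        _ ≤ I := setIntegral_le_integral hv.abs (ae_of_all _ fun y => abs_nonneg _)
    simp only [hA]
    rw [setAverage_eq, measureReal_def, smul_eq_mul, inv_mul_le_iff₀ (hCpos n x)]
    have h3 : (I / t) * t = I := div_mul_cancel₀ I ht_pos.ne'
    nlinarith [mul_le_mul_of_nonneg_right hμ1 ht_pos.le]
  -- stopping time
  have hstop : ∀ x ∈ E, ∃ n : ℤ, t < A n x ∧ ∀ m < n, ¬ t < A m x := by
    intro x hx
    have hne : ∃ n : ℤ, t < A n x := by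
      by_contra h
      push_neg at h
      have hle : F.maximal v x ≤ ENNReal.ofReal t := by
        rw [FiltrationOfPartitions.maximal]
        exact iSup_le fun n => ENNReal.ofReal_le_ofReal (h n)
      rw [hE] at hx
      exact absurd hx (not_lt.2 hle)
    obtain ⟨n, hn1, hn2⟩ := Int.exists_least_of_bdd
      (⟨m₀ + 1, fun z hz => by
        by_contra hlt
        push_neg at hlt
        exact absurd hz (not_lt.2 (hsmall z (by omega) x))⟩ :
          ∃ b : ℤ, ∀ z : ℤ, (fun n => t < A n x) z → b ≤ z) hne
    exact ⟨n, hn1, fun m hm hPm => absurd (hn2 m hPm) (not_le.2 hm)⟩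
  choose! τ hτ1 hτ2 using hstop
  -- key: the stopping cell absorbs its points
  have hkey : ∀ x ∈ E, ∀ z ∈ F.elem (τ x) x,
      z ∈ E ∧ F.elem (τ x) z = F.elem (τ x) x ∧ τ z = τ x := by
    intro x hx z hz
    have hsame : ∀ m ≤ τ x, F.elem m z = F.elem m x := fun m hm =>
      F.elem_eq_of_mem (F.elem_subset hm x hz)
    have hAeq : ∀ m ≤ τ x, A m z = A m x := by
      intro m hm; simp only [hA]; rw [hsame m hm]
    have hPz : t < A (τ x) z := by rw [hAeq _ le_rfl]; exact hτ1 x hx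
    have hnPz : ∀ m < τ x, ¬ t < A m z := by
      intro m hm
      rw [hAeq m hm.le]
      exact hτ2 x hx m hm
    have hzE : z ∈ E := by
      rw [hE]
      show ENNReal.ofReal t < F.maximal v z
      calc ENNReal.ofReal t < ENNReal.ofReal (A (τ x) z) :=
            (ENNReal.ofReal_lt_ofReal_iff (ht_pos.trans hPz)).2 hPz
        _ ≤ F.maximal v z := le_iSup (fun n => ENNReal.ofReal (A n z)) (τ x)
    have hττ : τ z = τ x := by
      rcases lt_trichotomy (τ z) (τ x) with h | h | h
      · exact absurd (hτ1 z hzE) (hnPz _ h)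
      · exact h
      · exact absurd hPz (hτ2 z hzE _ h)
    exact ⟨hzE, hsame _ le_rfl, hττ⟩
  -- the family of stopping cells
  set 𝒞 : Set (Set Ω) := (fun x => F.elem (τ x) x) '' E with h𝒞
  have h𝒞count : 𝒞.Countable := by
    refine (Set.countable_iUnion (fun n : ℤ => F.countable n)).mono ?_
    rintro C ⟨x, hx, rfl⟩
    exact Set.mem_iUnion.2 ⟨τ x, hCmem _ x⟩
  have h𝒞meas : ∀ C ∈ 𝒞, MeasurableSet C := by
    rintro C ⟨x, hx, rfl⟩; exact hCmeas _ x
  have h𝒞sub : ∀ C ∈ 𝒞, C ⊆ E := by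
    rintro C ⟨x, hx, rfl⟩ z hz
    exact (hkey x hx z hz).1
  have hEU : E = ⋃ C ∈ 𝒞, C := by
    apply Set.Subset.antisymm
    · intro x hx
      exact Set.mem_biUnion ⟨x, hx, rfl⟩ (F.elem_mem (τ x) x).2
    · intro z hz
      obtain ⟨C, hC, hzC⟩ := Set.mem_iUnion₂.1 hz
      exact h𝒞sub C hC hzC
  have h𝒞disj : 𝒞.PairwiseDisjoint id := by
    rintro C₁ h₁ C₂ h₂ hne
    obtain ⟨x₁, hx₁, rfl⟩ := h₁
    obtain ⟨x₂, hx₂, rfl⟩ := h₂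
    rw [Function.onFun, Set.disjoint_left]
    intro z hz₁ hz₂
    obtain ⟨_, he₁, ht₁⟩ := hkey x₁ hx₁ z hz₁
    obtain ⟨_, he₂, ht₂⟩ := hkey x₂ hx₂ z hz₂
    refine hne ?_
    show F.elem (τ x₁) x₁ = F.elem (τ x₂) x₂
    rw [← he₁, ← he₂, ← ht₁, ← ht₂]
  -- average over a stopping cell is at most lam/2
  have havg : ∀ x ∈ E, A (τ x) x ≤ lam / 2 := by
    intro x hx
    have hparent : A (τ x - 1) x ≤ t := not_lt.1 (hτ2 x hx (τ x - 1) (by omega))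
    have hμC : 0 < (μ (F.elem (τ x) x)).toReal := hCpos _ x
    have hμP : (μ (F.elem (τ x - 1) x)).toReal ≤ N₀ * (μ (F.elem (τ x) x)).toReal := by
      have h2 : (μ (F.elem (τ x - 1) x)).toReal ≤
          (ENNReal.ofReal N₀ * μ (F.elem (τ x) x)).toReal :=
        ENNReal.toReal_mono (ENNReal.mul_ne_top ENNReal.ofReal_ne_top (hCfin _ x).ne)
          (F.reg (τ x) x)
      rwa [ENNReal.toReal_mul, ENNReal.toReal_ofReal hN0pos.le] at h2
    have hIC : ∫ y in F.elem (τ x) x, v y ∂μ ≤ ∫ y in F.elem (τ x - 1) x, v y ∂μ :=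
      setIntegral_mono_set hv.integrableOn (ae_of_all _ fun y => h0v y)
        (HasSubset.Subset.eventuallyLE (F.nested (τ x) x))
    have hIP : ∫ y in F.elem (τ x - 1) x, v y ∂μ =
        (μ (F.elem (τ x - 1) x)).toReal * A (τ x - 1) x := by
      simp only [hA]
      rw [setAverage_eq, measureReal_def, smul_eq_mul, ← mul_assoc, mul_inv_cancel₀ (hCpos _ x).ne', one_mul]
    have hApos : 0 ≤ A (τ x - 1) x := by
      simp only [hA]
      rw [setAverage_eq, smul_eq_mul]
      exact mul_nonneg (inv_nonneg.2 ENNReal.toReal_nonneg)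
        (setIntegral_nonneg (hCmeas _ x) fun y _ => h0v y)
    simp only [hA]
    rw [setAverage_eq, measureReal_def, smul_eq_mul, inv_mul_le_iff₀ hμC]
    have hfin : N₀ * (μ (F.elem (τ x) x)).toReal * t =
        (μ (F.elem (τ x) x)).toReal * (lam / 2) := by rw [← hNt]; ring
    nlinarith [mul_le_mul_of_nonneg_right hμP ht_pos.le,
      mul_le_mul_of_nonneg_left hparent (ENNReal.toReal_nonneg :
        (0:ℝ) ≤ (μ (F.elem (τ x - 1) x)).toReal)]
  -- dispose of the trivial case
  by_cases htop : ∫⁻ x in E, ENNReal.ofReal (g x) ∂μ = ⊤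
  · rw [htop, ENNReal.mul_top (ENNReal.ofReal_pos.2 (by positivity)).ne']
    exact le_top
  -- measurable representative of u
  obtain ⟨u', hu'm, hu'ae⟩ : ∃ u' : Ω → ℝ, Measurable u' ∧ u =ᵐ[μ] u' :=
    ⟨hu.1.mk u, hu.1.measurable_mk, hu.1.ae_eq_mk⟩
  have hu' : Integrable u' μ := hu.congr hu'ae
  set S' : Set Ω := {x | lam ≤ u' x} with hS'
  have hS'meas : MeasurableSet S' := measurableSet_le measurable_const hu'm
  have hSS' : μ {x | lam ≤ u x} ≤ μ S' := by
    have hsub : {x | lam ≤ u x} ⊆ S' ∪ {x | u x ≠ u' x} := by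
      intro x hx
      by_cases h : u x = u' x
      · exact Or.inl (by rw [hS']; exact Set.mem_setOf_eq ▸ (h ▸ hx))
      · exact Or.inr h
    calc μ {x | lam ≤ u x} ≤ μ (S' ∪ {x | u x ≠ u' x}) := measure_mono hsub
      _ ≤ μ S' + μ {x | u x ≠ u' x} := measure_union_le _ _
      _ = μ S' := by rw [ae_iff.1 hu'ae, add_zero]
  -- a.e. domination by the maximal function
  have hdom : ∀ᵐ x ∂μ, ENNReal.ofReal (u' x) ≤ F.maximal v x := by
    filter_upwards [F.conv u hu, hu'ae] with x hx hx'
    rw [← hx']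
    refine le_of_tendsto ((ENNReal.continuous_ofReal.tendsto (u x)).comp hx) ?_
    filter_upwards with n
    calc ENNReal.ofReal (⨍ y in F.elem n x, u y ∂μ)
        ≤ ENNReal.ofReal (⨍ y in F.elem n x, v y ∂μ) := by
          apply ENNReal.ofReal_le_ofReal
          rw [setAverage_eq, setAverage_eq, smul_eq_mul, smul_eq_mul]
          exact mul_le_mul_of_nonneg_left
            (setIntegral_mono hu.integrableOn hv.integrableOn huv)
            (inv_nonneg.2 ENNReal.toReal_nonneg)
      _ ≤ F.maximal v x := le_iSup (fun n => ENNReal.ofReal (⨍ y in F.elem n x, v y ∂μ)) n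
  have hnull : μ (S' \ E) = 0 := by
    refine measure_mono_null ?_ (ae_iff.1 hdom)
    rintro x ⟨hxS, hxE⟩
    rw [hE, Set.mem_setOf_eq, not_lt] at hxE
    simp only [Set.mem_setOf_eq]
    intro hcon
    have : ENNReal.ofReal lam ≤ ENNReal.ofReal t :=
      (ENNReal.ofReal_le_ofReal hxS).trans (hcon.trans hxE)
    exact absurd ((ENNReal.ofReal_le_ofReal_iff ht_pos.le).1 this) (not_le.2 ht_lt)
  -- per-cube estimate
  have hest : ∀ C ∈ 𝒞, μ (S' ∩ C) ≤
      ENNReal.ofReal (2 / lam) * ∫⁻ y in C, ENNReal.ofReal (g y) ∂μ := by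
    rintro C ⟨x, hx, rfl⟩
    set n := τ x with hn
    have hmeasC : MeasurableSet (F.elem n x) := hCmeas n x
    have hfinC : μ (F.elem n x) < ⊤ := hCfin n x
    have hfinSC : μ (S' ∩ F.elem n x) < ⊤ :=
      lt_of_le_of_lt (measure_mono Set.inter_subset_right) hfinC
    set a : ℝ := ⨍ y in F.elem n x, v y ∂μ with ha
    have ha2 : a ≤ lam / 2 := havg x hx
    have hfint : IntegrableOn (fun y => max (u' y - a) 0) (F.elem n x) μ :=
      ((hu'.integrableOn.sub (integrableOn_const hfinC.ne)).pos_part)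
    have step1 : lam / 2 * (μ (S' ∩ F.elem n x)).toReal ≤
        ∫ y in S' ∩ F.elem n x, max (u' y - a) 0 ∂μ := by
      refine setIntegral_ge_of_const_le_real (hS'meas.inter hmeasC) hfinSC.ne
        (fun y hy => ?_) (hfint.mono_set Set.inter_subset_right)
      have hyl : lam ≤ u' y := hy.1
      have : lam / 2 ≤ u' y - a := by linarith
      exact this.trans (le_max_left _ _)
    have step2 : ∫ y in S' ∩ F.elem n x, max (u' y - a) 0 ∂μ ≤
        ∫ y in F.elem n x, max (u' y - a) 0 ∂μ :=
      setIntegral_mono_set hfint (ae_of_all _ fun y => le_max_right _ _)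
        (HasSubset.Subset.eventuallyLE Set.inter_subset_right)
    have step3 : ∫ y in F.elem n x, max (u' y - a) 0 ∂μ =
        ∫ y in F.elem n x, max (u y - a) 0 ∂μ := by
      refine integral_congr_ae ?_
      filter_upwards [ae_restrict_of_ae hu'ae] with y hy
      rw [hy]
    have step4 : ∫ y in F.elem n x, max (u y - a) 0 ∂μ ≤ ∫ y in F.elem n x, g y ∂μ :=
      hmain n _ (hCmem n x)
    have hreal : lam / 2 * (μ (S' ∩ F.elem n x)).toReal ≤ ∫ y in F.elem n x, g y ∂μ := by
      linarith
    -- pass to lintegral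
    have hglt : ∫⁻ y in F.elem n x, ENNReal.ofReal (g y) ∂μ ≠ ⊤ := by
      refine ne_top_of_le_ne_top htop (lintegral_mono_set ?_)
      intro z hz
      exact (hkey x hx z hz).1
    have hgint : IntegrableOn g (F.elem n x) μ := by
      refine ⟨hgm.aestronglyMeasurable.restrict, ?_⟩
      rw [hasFiniteIntegral_iff_ofReal (ae_of_all _ hg0)]
      exact lt_top_iff_ne_top.2 hglt
    have hgeq : ENNReal.ofReal (∫ y in F.elem n x, g y ∂μ) =
        ∫⁻ y in F.elem n x, ENNReal.ofReal (g y) ∂μ :=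
      ofReal_integral_eq_lintegral_ofReal hgint (ae_of_all _ fun y => hg0 y)
    calc μ (S' ∩ F.elem n x) = ENNReal.ofReal ((μ (S' ∩ F.elem n x)).toReal) :=
          (ENNReal.ofReal_toReal hfinSC.ne).symm
      _ ≤ ENNReal.ofReal ((2 / lam) * ∫ y in F.elem n x, g y ∂μ) := by
          apply ENNReal.ofReal_le_ofReal
          have h2 : (2 / lam) * (lam / 2 * (μ (S' ∩ F.elem n x)).toReal) =
              (μ (S' ∩ F.elem n x)).toReal := by field_simp
          nlinarith [mul_le_mul_of_nonneg_left hreal (by positivity : (0:ℝ) ≤ 2 / lam)]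
      _ = ENNReal.ofReal (2 / lam) * ENNReal.ofReal (∫ y in F.elem n x, g y ∂μ) :=
          ENNReal.ofReal_mul (by positivity)
      _ = _ := by rw [hgeq]
  -- assemble
  calc μ {x | lam ≤ u x} ≤ μ S' := hSS'
    _ ≤ μ (S' ∩ E) + μ (S' \ E) := measure_le_inter_add_diff μ S' E
    _ = μ (S' ∩ E) := by rw [hnull, add_zero]
    _ = μ (⋃ C ∈ 𝒞, S' ∩ C) := by rw [hEU, Set.inter_iUnion₂]
    _ ≤ ∑' C : 𝒞, μ (S' ∩ C) := measure_biUnion_le μ h𝒞count _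
    _ ≤ ∑' C : 𝒞, ENNReal.ofReal (2 / lam) * ∫⁻ y in (C : Set Ω), ENNReal.ofReal (g y) ∂μ :=
          ENNReal.tsum_le_tsum fun C => hest C C.2
    _ = ENNReal.ofReal (2 / lam) *
          ∑' C : 𝒞, ∫⁻ y in (C : Set Ω), ENNReal.ofReal (g y) ∂μ := ENNReal.tsum_mul_left
    _ = ENNReal.ofReal (2 / lam) *
          ∫⁻ y in ⋃ C ∈ 𝒞, C, ENNReal.ofReal (g y) ∂μ := by
          rw [lintegral_biUnion h𝒞count h𝒞meas h𝒞disj]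
    _ = _ := by rw [← hEU]
end

section
/- Under the hypotheses of the stopping-time distribution lemma (0 ≤ u ≤ v integrable, g ≥ 0, and ∫_C (u - v_C)_+ dμ ≤ ∫_C g dμ for every element C of every partition ℂ_n), for any p ∈ (1,∞) one has ‖u‖_{L^p}^p ≤ N(p, N₀) ‖g‖_{L^p} ‖v‖_{L^p}^{p-1}, where N depends only on p and the regularity constant N₀ of the filtration. -/
open MeasureTheory Filter
open scoped ENNReal Topology

open Set

namespace StmtAux

variable {Ω : Type} [MeasurableSpace Ω] {μ : Measure Ω} {N₀ : ℝ}
variable (F : FiltrationOfPartitions Ω μ N₀)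

lemma elem_eq_of_mem {n : ℤ} {C : Set Ω} {x : Ω} (hC : C ∈ F.part n) (hx : x ∈ C) :
    F.elem n x = C := by
  by_contra h
  exact (Set.disjoint_left.1 (F.disj n (F.elem_mem n x).1 hC h)) (F.elem_mem n x).2 hx

lemma elem_subset {m n : ℤ} (h : m ≤ n) (x : Ω) : F.elem n x ⊆ F.elem m x := by
  have key : ∀ k : ℕ, F.elem (m + k) x ⊆ F.elem m x := by
    intro k
    induction k with
    | zero => simp
    | succ k ih =>
      refine subset_trans (fun y hy => ?_) ih
      have hy' : y ∈ F.elem (m + k + 1) x := by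
        have : (m + ((k+1:ℕ) : ℤ)) = m + k + 1 := by push_cast; ring
        rwa [this] at hy
      have := F.nested (m + k + 1) x hy'
      simpa using this
  have hn : n = m + ((n - m).toNat : ℤ) := by
    rw [Int.toNat_of_nonneg (by omega)]; ring
  rw [hn]
  exact key _

lemma elem_eq_elem {n : ℤ} {x y : Ω} (hy : y ∈ F.elem n x) : F.elem n y = F.elem n x :=
  elem_eq_of_mem F (F.elem_mem n x).1 hy

lemma measurable_comp_elem (n : ℤ) {β : Type*} [MeasurableSpace β] (h : Set Ω → β) :
    Measurable fun x => h (F.elem n x) := by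
  intro S _
  have : (fun x => h (F.elem n x)) ⁻¹' S = ⋃ C ∈ {C | C ∈ F.part n ∧ h C ∈ S}, C := by
    ext x
    simp only [mem_preimage, mem_iUnion, mem_setOf_eq]
    constructor
    · intro hx
      exact ⟨F.elem n x, ⟨(F.elem_mem n x).1, hx⟩, (F.elem_mem n x).2⟩
    · rintro ⟨C, ⟨hC, hCS⟩, hxC⟩
      rwa [elem_eq_of_mem F hC hxC]
  rw [this]
  exact MeasurableSet.biUnion ((F.countable n).mono (fun C hC => hC.1))
    (fun C hC => F.meas n C hC.1)

lemma measurable_maximal (v : Ω → ℝ) : Measurable (F.maximal v) := by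
  unfold FiltrationOfPartitions.maximal
  exact Measurable.iSup fun n =>
    measurable_comp_elem F n (fun C => ENNReal.ofReal (⨍ y in C, v y ∂μ))

section Avg

variable {v' : Ω → ℝ} (hv'i : Integrable v' μ) (hv'0 : ∀ x, 0 ≤ v' x)

include hv'0 in
lemma avg_nonneg (C : Set Ω) : 0 ≤ ⨍ y in C, v' y ∂μ := by
  rw [setAverage_eq, smul_eq_mul]
  exact mul_nonneg (inv_nonneg.2 ENNReal.toReal_nonneg) (integral_nonneg hv'0)

include hv'i hv'0 in
lemma key_lower {n : ℤ} {C : Set Ω} (hC : C ∈ F.part n) {s : ℝ} (hs : 0 < s)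
    (h : s < ⨍ y in C, v' y ∂μ) :
    μ C ≤ ENNReal.ofReal s⁻¹ * ∫⁻ y in C, ENNReal.ofReal (v' y) ∂μ := by
  have hCf : μ C ≠ ⊤ := (F.finite n C hC).ne
  have hCp : 0 < μ C := F.pos n C hC
  have ht : 0 < (μ C).toReal := ENNReal.toReal_pos hCp.ne' hCf
  rw [setAverage_eq, smul_eq_mul] at h
  have h2 : (μ C).toReal ≤ s⁻¹ * ∫ y in C, v' y ∂μ := by
    rw [← div_eq_inv_mul, le_div_iff₀ hs, mul_comm]
    have := mul_lt_mul_of_pos_right h ht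
    rw [measureReal_def, mul_comm ((μ C).toReal)⁻¹ _, mul_assoc, inv_mul_cancel₀ ht.ne', mul_one] at this
    exact this.le
  calc μ C = ENNReal.ofReal ((μ C).toReal) := (ENNReal.ofReal_toReal hCf).symm
    _ ≤ ENNReal.ofReal (s⁻¹ * ∫ y in C, v' y ∂μ) := ENNReal.ofReal_le_ofReal h2
    _ = ENNReal.ofReal s⁻¹ * ENNReal.ofReal (∫ y in C, v' y ∂μ) :=
        ENNReal.ofReal_mul (inv_nonneg.2 hs.le)
    _ ≤ ENNReal.ofReal s⁻¹ * ∫⁻ y in C, ENNReal.ofReal (v' y) ∂μ := by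
        gcongr
        exact le_of_eq (ofReal_integral_eq_lintegral_ofReal hv'i.integrableOn
          (Eventually.of_forall fun y => hv'0 y))

include hv'i hv'0 in
lemma key_upper (hN₀ : 1 ≤ N₀) {n : ℤ} {x : Ω} {s : ℝ} (hs : 0 ≤ s)
    (hpar : ⨍ y in F.elem (n - 1) x, v' y ∂μ ≤ s) :
    ⨍ y in F.elem n x, v' y ∂μ ≤ N₀ * s := by
  set C := F.elem n x with hCdef
  set P := F.elem (n - 1) x with hPdef
  have hCmem := (F.elem_mem n x).1
  have hPmem := (F.elem_mem (n - 1) x).1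
  have hCf : μ C ≠ ⊤ := (F.finite n C hCmem).ne
  have hPf : μ P ≠ ⊤ := (F.finite (n - 1) P hPmem).ne
  have htC : 0 < (μ C).toReal := ENNReal.toReal_pos (F.pos n C hCmem).ne' hCf
  have htP : 0 < (μ P).toReal := ENNReal.toReal_pos (F.pos (n - 1) P hPmem).ne' hPf
  have hsub : C ⊆ P := F.nested n x
  have hIle : ∫ y in C, v' y ∂μ ≤ ∫ y in P, v' y ∂μ :=
    setIntegral_mono_set hv'i.integrableOn
      (ae_restrict_of_ae (Eventually.of_forall hv'0)) hsub.eventuallyLE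
  have hreg : (μ P).toReal ≤ N₀ * (μ C).toReal := by
    have h1 : μ P ≤ ENNReal.ofReal N₀ * μ C := F.reg n x
    have h2 := ENNReal.toReal_mono (by finiteness) h1
    rwa [ENNReal.toReal_mul, ENNReal.toReal_ofReal (by linarith)] at h2
  have hPavg : ∫ y in P, v' y ∂μ = (μ P).toReal * ⨍ y in P, v' y ∂μ := by
    rw [setAverage_eq, smul_eq_mul, measureReal_def, ← mul_assoc, mul_inv_cancel₀ htP.ne', one_mul]
  rw [setAverage_eq, smul_eq_mul]
  have havgP : 0 ≤ ⨍ y in P, v' y ∂μ := avg_nonneg hv'0 P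
  have hIP : ∫ y in P, v' y ∂μ ≤ N₀ * (μ C).toReal * s := by
    rw [hPavg]
    exact mul_le_mul hreg hpar havgP (by positivity)
  calc ((μ C).toReal)⁻¹ * ∫ y in C, v' y ∂μ
      ≤ ((μ C).toReal)⁻¹ * (N₀ * (μ C).toReal * s) := by
        apply mul_le_mul_of_nonneg_left (le_trans hIle hIP)
        positivity
    _ = N₀ * s := by field_simp

include hv'i hv'0 in
lemma avg_small {s : ℝ} (hs : 0 < s) :
    ∃ m : ℤ, ∀ n : ℤ, n ≤ m → ∀ x : Ω, ⨍ y in F.elem n x, v' y ∂μ ≤ s := by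
  set I := ∫ y, v' y ∂μ with hI
  have hInn : 0 ≤ I := integral_nonneg hv'0
  obtain ⟨m, hm⟩ := F.large (max 1 (I / s))
  refine ⟨m, fun n hn x => ?_⟩
  set C := F.elem n x with hC
  have hCmem := (F.elem_mem n x).1
  have hCf : μ C ≠ ⊤ := (F.finite n C hCmem).ne
  have hMle : max 1 (I / s) ≤ (μ C).toReal := by
    have := hm n hn C hCmem
    have := (ENNReal.ofReal_le_iff_le_toReal hCf).1 this
    exact this
  have htC : 0 < (μ C).toReal := lt_of_lt_of_le (by positivity) hMle
  rw [setAverage_eq, smul_eq_mul]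
  have hIC : ∫ y in C, v' y ∂μ ≤ I :=
    setIntegral_le_integral hv'i (Eventually.of_forall hv'0)
  have h1 : ((μ C).toReal)⁻¹ * ∫ y in C, v' y ∂μ ≤ ((μ C).toReal)⁻¹ * I := by
    apply mul_le_mul_of_nonneg_left hIC; positivity
  refine h1.trans ?_
  rw [← div_eq_inv_mul, div_le_iff₀ htC]
  have hds : I / s ≤ (μ C).toReal := le_trans (le_max_right _ _) hMle
  calc I = (I / s) * s := by field_simp
    _ ≤ (μ C).toReal * s := by apply mul_le_mul_of_nonneg_right hds hs.le
    _ = s * (μ C).toReal := by ring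

include hv'i hv'0 in
lemma stopping {s : ℝ} (hs : 0 < s) {x : Ω} (hx : ENNReal.ofReal s < F.maximal v' x) :
    ∃ n : ℤ, (s < ⨍ y in F.elem n x, v' y ∂μ) ∧
      ∀ k : ℤ, k < n → ⨍ y in F.elem k x, v' y ∂μ ≤ s := by
  have hx' : ∃ n : ℤ, s < ⨍ y in F.elem n x, v' y ∂μ := by
    rw [FiltrationOfPartitions.maximal, lt_iSup_iff] at hx
    obtain ⟨n, hn⟩ := hx
    exact ⟨n, (ENNReal.ofReal_lt_ofReal_iff_of_nonneg hs.le).1 hn⟩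
  obtain ⟨m, hm⟩ := avg_small F hv'i hv'0 hs
  have hbdd : ∃ b : ℤ, ∀ z : ℤ, (s < ⨍ y in F.elem z x, v' y ∂μ) → b ≤ z := by
    refine ⟨m + 1, fun z hz => ?_⟩
    by_contra hlt
    exact absurd (hm z (by omega) x) (not_le.2 hz)
  obtain ⟨lb, hlb, hmin⟩ := Int.exists_least_of_bdd hbdd hx'
  exact ⟨lb, hlb, fun k hk => not_lt.1 (fun hgt => absurd (hmin k hgt) (by omega))⟩

include hv'i hv'0 in
lemma exists_family (hN₀ : 1 ≤ N₀) {s : ℝ} (hs : 0 < s) :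
    ∃ 𝒮 : Set (Set Ω), 𝒮.Countable ∧ 𝒮.Pairwise Disjoint ∧
      (⋃₀ 𝒮 = {x | ENNReal.ofReal s < F.maximal v' x}) ∧
      ∀ C ∈ 𝒮, MeasurableSet C ∧ μ C ≠ ⊤ ∧ (∃ n, C ∈ F.part n) ∧
        s < ⨍ y in C, v' y ∂μ ∧ ⨍ y in C, v' y ∂μ ≤ N₀ * s := by
  classical
  set E := {x | ENNReal.ofReal s < F.maximal v' x} with hE
  set P : Ω → ℤ → Prop := fun x n => (s < ⨍ y in F.elem n x, v' y ∂μ) ∧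
      ∀ k : ℤ, k < n → ⨍ y in F.elem k x, v' y ∂μ ≤ s with hP
  set τ : Ω → ℤ := fun x => if h : ∃ n, P x n then h.choose else 0 with hτ
  have hτspec : ∀ x ∈ E, P x (τ x) := by
    intro x hx
    have h : ∃ n, P x n := stopping F hv'i hv'0 hs hx
    simp only [hτ, dif_pos h]
    exact h.choose_spec
  have hkey : ∀ x ∈ E, ∀ y ∈ E, τ x ≤ τ y →
      (F.elem (τ x) x ∩ F.elem (τ y) y).Nonempty → F.elem (τ y) y = F.elem (τ x) x := by
    rintro x hx y hy hle ⟨z, hzx, hzy⟩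
    have h1 : F.elem (τ y) z = F.elem (τ y) y := elem_eq_elem F hzy
    have h2 : F.elem (τ x) z = F.elem (τ x) x := elem_eq_elem F hzx
    have h3 : F.elem (τ y) y ⊆ F.elem (τ x) x := by
      rw [← h1, ← h2]; exact elem_subset F hle z
    have hyx : y ∈ F.elem (τ x) x := h3 (F.elem_mem (τ y) y).2
    have h4 : F.elem (τ x) y = F.elem (τ x) x := elem_eq_elem F hyx
    have h5 : s < ⨍ w in F.elem (τ x) y, v' w ∂μ := by rw [h4]; exact (hτspec x hx).1
    have h6 : τ y ≤ τ x := by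
      by_contra hlt
      exact absurd ((hτspec y hy).2 (τ x) (by omega)) (not_le.2 h5)
    have h7 : τ y = τ x := le_antisymm h6 hle
    rw [h7, h4]
  refine ⟨(fun x => F.elem (τ x) x) '' E, ?_, ?_, ?_, ?_⟩
  · apply Set.Countable.mono _ (Set.countable_iUnion F.countable)
    rintro C ⟨x, hx, rfl⟩
    exact Set.mem_iUnion.2 ⟨τ x, (F.elem_mem (τ x) x).1⟩
  · rintro C ⟨x, hx, rfl⟩ D ⟨y, hy, rfl⟩ hne
    rw [Set.disjoint_iff_inter_eq_empty]
    by_contra hint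
    have hnon := Set.nonempty_iff_ne_empty.2 hint
    rcases le_total (τ x) (τ y) with h | h
    · exact hne (hkey x hx y hy h hnon).symm
    · exact hne (hkey y hy x hx h (by rwa [Set.inter_comm] at hnon))
  · apply Set.Subset.antisymm
    · rintro z ⟨C, ⟨x, hx, rfl⟩, hzC⟩
      have h2 : F.elem (τ x) z = F.elem (τ x) x := elem_eq_elem F hzC
      have h5 : s < ⨍ w in F.elem (τ x) z, v' w ∂μ := by rw [h2]; exact (hτspec x hx).1
      show ENNReal.ofReal s < F.maximal v' z
      calc ENNReal.ofReal s < ENNReal.ofReal (⨍ w in F.elem (τ x) z, v' w ∂μ) :=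
            (ENNReal.ofReal_lt_ofReal_iff_of_nonneg hs.le).2 h5
        _ ≤ F.maximal v' z :=
            le_iSup (fun n => ENNReal.ofReal (⨍ w in F.elem n z, v' w ∂μ)) (τ x)
    · intro x hx
      exact ⟨F.elem (τ x) x, ⟨x, hx, rfl⟩, (F.elem_mem (τ x) x).2⟩
  · rintro C ⟨x, hx, rfl⟩
    have hmem := (F.elem_mem (τ x) x).1
    refine ⟨F.meas _ _ hmem, (F.finite _ _ hmem).ne, ⟨τ x, hmem⟩, (hτspec x hx).1, ?_⟩
    exact key_upper F hv'i hv'0 hN₀ hs.le ((hτspec x hx).2 (τ x - 1) (by omega))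

include hv'i hv'0 in
lemma weak_bound (hN₀ : 1 ≤ N₀) {s : ℝ} (hs : 0 < s) :
    μ {x | ENNReal.ofReal s < F.maximal v' x} ≤
      ENNReal.ofReal s⁻¹ *
        ∫⁻ x in {x | ENNReal.ofReal s < F.maximal v' x}, ENNReal.ofReal (v' x) ∂μ := by
  obtain ⟨𝒮, hcnt, hdisj, hunion, hmem⟩ := exists_family F hv'i hv'0 hN₀ hs
  haveI : Countable ↥𝒮 := hcnt.to_subtype
  have hiU : {x | ENNReal.ofReal s < F.maximal v' x} = ⋃ C : 𝒮, (C : Set Ω) := by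
    rw [← hunion, Set.sUnion_eq_iUnion]
  have hmeas : ∀ C : 𝒮, MeasurableSet (C : Set Ω) := fun C => (hmem C C.2).1
  have hpw : Pairwise (Function.onFun Disjoint fun C : 𝒮 => (C : Set Ω)) := by
    intro C D hne
    exact hdisj C.2 D.2 (fun h => hne (Subtype.ext h))
  rw [hiU]
  calc μ (⋃ C : 𝒮, (C : Set Ω)) ≤ ∑' C : 𝒮, μ (C : Set Ω) := measure_iUnion_le _
    _ ≤ ∑' C : 𝒮, ENNReal.ofReal s⁻¹ * ∫⁻ y in (C : Set Ω), ENNReal.ofReal (v' y) ∂μ := by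
        apply ENNReal.tsum_le_tsum
        intro C
        obtain ⟨n, hn⟩ := (hmem C C.2).2.2.1
        exact key_lower F hv'i hv'0 hn hs (hmem C C.2).2.2.2.1
    _ = ENNReal.ofReal s⁻¹ * ∑' C : 𝒮, ∫⁻ y in (C : Set Ω), ENNReal.ofReal (v' y) ∂μ :=
        ENNReal.tsum_mul_left
    _ = ENNReal.ofReal s⁻¹ * ∫⁻ y in ⋃ C : 𝒮, (C : Set Ω), ENNReal.ofReal (v' y) ∂μ := by
        rw [lintegral_iUnion hmeas hpw]

include hv'i hv'0 in
lemma ae_le_maximal {u' : Ω → ℝ} (hu'i : Integrable u' μ) (hle : u' ≤ᵐ[μ] v') :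
    ∀ᵐ x ∂μ, ENNReal.ofReal (u' x) ≤ F.maximal v' x := by
  filter_upwards [F.conv u' hu'i] with x hx
  refine le_of_tendsto (ENNReal.tendsto_ofReal hx) (Eventually.of_forall fun n => ?_)
  have hmono : ⨍ y in F.elem n x, u' y ∂μ ≤ ⨍ y in F.elem n x, v' y ∂μ := by
    rw [setAverage_eq, setAverage_eq, smul_eq_mul, smul_eq_mul]
    apply mul_le_mul_of_nonneg_left _ (by positivity)
    exact integral_mono_ae hu'i.integrableOn hv'i.integrableOn
      (ae_restrict_of_ae hle)
  calc ENNReal.ofReal (⨍ y in F.elem n x, u' y ∂μ)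
      ≤ ENNReal.ofReal (⨍ y in F.elem n x, v' y ∂μ) := ENNReal.ofReal_le_ofReal hmono
    _ ≤ F.maximal v' x := le_iSup (fun n => ENNReal.ofReal (⨍ y in F.elem n x, v' y ∂μ)) n

include hv'0 in
lemma lintegral_ofReal_lt_top (hv'i : Integrable v' μ) :
    ∫⁻ x, ENNReal.ofReal (v' x) ∂μ < ⊤ := by
  have h : ∀ x, ENNReal.ofReal (v' x) = (‖v' x‖₊ : ℝ≥0∞) := fun x =>
    (Real.enorm_eq_ofReal (hv'0 x)).symm
  rw [lintegral_congr h]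
  exact hv'i.2

include hv'i hv'0 in
lemma maximal_ae_lt_top (hN₀ : 1 ≤ N₀) : ∀ᵐ x ∂μ, F.maximal v' x < ⊤ := by
  set K := ∫⁻ x, ENNReal.ofReal (v' x) ∂μ with hK
  have hKlt : K < ⊤ := lintegral_ofReal_lt_top hv'0 hv'i
  have hbound : ∀ k : ℕ, μ {x | F.maximal v' x = ⊤} ≤ ENNReal.ofReal ((k + 1 : ℝ))⁻¹ * K := by
    intro k
    have h1 : {x | F.maximal v' x = ⊤} ⊆
        {x | ENNReal.ofReal (k + 1 : ℝ) < F.maximal v' x} := by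
      intro x hx
      simp only [Set.mem_setOf_eq] at *
      rw [hx]
      exact ENNReal.ofReal_lt_top
    calc μ {x | F.maximal v' x = ⊤}
        ≤ μ {x | ENNReal.ofReal (k + 1 : ℝ) < F.maximal v' x} := measure_mono h1
      _ ≤ ENNReal.ofReal ((k + 1 : ℝ))⁻¹ *
          ∫⁻ x in {x | ENNReal.ofReal (k + 1 : ℝ) < F.maximal v' x},
            ENNReal.ofReal (v' x) ∂μ := weak_bound F hv'i hv'0 hN₀ (by positivity)
      _ ≤ ENNReal.ofReal ((k + 1 : ℝ))⁻¹ * K := by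
          gcongr
          exact setLIntegral_le_lintegral _ _
  have htend : Tendsto (fun k : ℕ => ENNReal.ofReal ((k + 1 : ℝ))⁻¹ * K) atTop (𝓝 0) := by
    have h0 : Tendsto (fun k : ℕ => ((k + 1 : ℝ))⁻¹) atTop (𝓝 0) := by
      simpa [one_div] using tendsto_one_div_add_atTop_nhds_zero_nat (𝕜 := ℝ)
    have h1 := ENNReal.tendsto_ofReal h0
    rw [ENNReal.ofReal_zero] at h1
    have h2 := ENNReal.Tendsto.mul_const h1 (Or.inr hKlt.ne)
    rwa [zero_mul] at h2
  have hzero : μ {x | F.maximal v' x = ⊤} = 0 :=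
    le_antisymm (ge_of_tendsto htend (Eventually.of_forall hbound)) zero_le
  have hset : {x | ¬ F.maximal v' x < ⊤} = {x | F.maximal v' x = ⊤} := by
    ext x; simp [lt_top_iff_ne_top]
  rw [ae_iff, hset]
  exact hzero

include hv'i hv'0 in
lemma weak_bound' (hv'm : Measurable v') (hN₀ : 1 ≤ N₀) {s : ℝ} (hs : 0 < s) :
    μ {x | ENNReal.ofReal s < F.maximal v' x} ≤
      ENNReal.ofReal 2 * ENNReal.ofReal s⁻¹ *
        ∫⁻ x in {x | s / 2 < v' x}, ENNReal.ofReal (v' x) ∂μ := by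
  set E := {x | ENNReal.ofReal s < F.maximal v' x} with hEdef
  set W := ∫⁻ x in {x | s / 2 < v' x}, ENNReal.ofReal (v' x) ∂μ with hW
  have hEfin : μ E ≠ ⊤ := by
    have : μ E ≤ ENNReal.ofReal s⁻¹ * ∫⁻ x, ENNReal.ofReal (v' x) ∂μ := by
      refine (weak_bound F hv'i hv'0 hN₀ hs).trans ?_
      gcongr
      exact Measure.restrict_le_self
    exact (lt_of_le_of_lt this
      (ENNReal.mul_lt_top ENNReal.ofReal_lt_top (lintegral_ofReal_lt_top hv'0 hv'i))).ne
  have hsetm : MeasurableSet {x | s / 2 < v' x} := measurableSet_lt measurable_const hv'm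
  have hsplit : ∫⁻ x in E, ENNReal.ofReal (v' x) ∂μ ≤ W + ENNReal.ofReal (s / 2) * μ E := by
    have hpt : ∀ x, ENNReal.ofReal (v' x) ≤
        ({x | s / 2 < v' x}.indicator fun x => ENNReal.ofReal (v' x)) x +
          ENNReal.ofReal (s / 2) := by
      intro x
      by_cases hx : x ∈ {x | s / 2 < v' x}
      · rw [Set.indicator_of_mem hx]; exact le_self_add
      · rw [Set.indicator_of_notMem hx, zero_add]
        exact ENNReal.ofReal_le_ofReal (not_lt.1 hx)
    calc ∫⁻ x in E, ENNReal.ofReal (v' x) ∂μ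
        ≤ ∫⁻ x in E, (({x | s / 2 < v' x}.indicator fun x => ENNReal.ofReal (v' x)) x +
            ENNReal.ofReal (s / 2)) ∂μ := lintegral_mono hpt
      _ = ∫⁻ x in E, ({x | s / 2 < v' x}.indicator fun x => ENNReal.ofReal (v' x)) x ∂μ +
            ENNReal.ofReal (s / 2) * μ E := by
          rw [lintegral_add_right _ measurable_const, setLIntegral_const]
      _ ≤ W + ENNReal.ofReal (s / 2) * μ E := by
          gcongr
          refine le_trans (lintegral_mono' Measure.restrict_le_self le_rfl) ?_
          rw [lintegral_indicator hsetm]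
  have h1 : μ E ≤ ENNReal.ofReal s⁻¹ * W + μ E / 2 := by
    have h2 := (weak_bound F hv'i hv'0 hN₀ hs).trans
      (mul_le_mul_right hsplit (ENNReal.ofReal s⁻¹))
    rw [mul_add, ← mul_assoc] at h2
    have h3 : ENNReal.ofReal s⁻¹ * ENNReal.ofReal (s / 2) = ENNReal.ofReal 2⁻¹ := by
      rw [← ENNReal.ofReal_mul (by positivity)]
      congr 1
      field_simp
    have h4 : ENNReal.ofReal 2⁻¹ * μ E = μ E / 2 := by
      rw [ENNReal.ofReal_inv_of_pos (by norm_num), ENNReal.ofReal_ofNat,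
        ENNReal.div_eq_inv_mul]
    rw [h3, h4] at h2
    exact h2
  have h5 : μ E / 2 ≤ ENNReal.ofReal s⁻¹ * W := by
    have := tsub_le_iff_right.2 h1
    rwa [ENNReal.sub_half hEfin] at this
  calc μ E = μ E / 2 * 2 := (ENNReal.div_mul_cancel (by norm_num) (by norm_num)).symm
    _ ≤ ENNReal.ofReal s⁻¹ * W * 2 := mul_le_mul_left h5 2
    _ = ENNReal.ofReal 2 * ENNReal.ofReal s⁻¹ * W := by
        rw [ENNReal.ofReal_ofNat]
        ring

include hv'i hv'0 in
lemma dist_bound (hN₀ : 1 ≤ N₀) {u' g : Ω → ℝ} (hu'm : Measurable u') (hu'i : Integrable u' μ)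
    (hg0 : ∀ x, 0 ≤ g x)
    (hmain : ∀ n : ℤ, ∀ C ∈ F.part n,
      ∫ x in C, max (u' x - ⨍ y in C, v' y ∂μ) 0 ∂μ ≤ ∫ x in C, g x ∂μ)
    (hle : u' ≤ᵐ[μ] v') {l : ℝ} (hl : 0 < l) :
    μ {x | l < u' x} ≤ ENNReal.ofReal 2 * ENNReal.ofReal l⁻¹ *
      ∫⁻ x in {x | ENNReal.ofReal (l / (2 * N₀)) < F.maximal v' x},
        ENNReal.ofReal (g x) ∂μ := by
  have hN₀pos : 0 < N₀ := lt_of_lt_of_le zero_lt_one hN₀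
  set s := l / (2 * N₀) with hsdef
  have hs : 0 < s := by positivity
  obtain ⟨𝒮, hcnt, hdisj, hunion, hmem⟩ := exists_family F hv'i hv'0 hN₀ hs
  haveI : Countable ↥𝒮 := hcnt.to_subtype
  set E := {x | ENNReal.ofReal s < F.maximal v' x} with hEdef
  set X := {x | l < u' x} with hXdef
  have hXm : MeasurableSet X := measurableSet_lt measurable_const hu'm
  have hCb : ∀ C ∈ 𝒮, μ (C ∩ X) ≤
      ENNReal.ofReal 2 * ENNReal.ofReal l⁻¹ * ∫⁻ y in C, ENNReal.ofReal (g y) ∂μ := by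
    intro C hC
    obtain ⟨hCm, hCf, ⟨n, hCn⟩, hlow, hupp⟩ := hmem C hC
    set c := ⨍ y in C, v' y ∂μ with hc
    have hc2 : c ≤ l / 2 := by
      refine hupp.trans (le_of_eq ?_)
      rw [hsdef]
      field_simp
    have hDm : MeasurableSet (C ∩ X) := hCm.inter hXm
    have hDf : μ (C ∩ X) ≠ ⊤ :=
      (lt_of_le_of_lt (measure_mono Set.inter_subset_left) (lt_top_iff_ne_top.2 hCf)).ne
    have hpt : ∀ x ∈ C ∩ X, l / 2 ≤ max (u' x - c) 0 := by
      rintro x ⟨hxC, hxX⟩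
      have h1 : l < u' x := hxX
      have h2 : l / 2 ≤ u' x - c := by linarith
      exact le_trans h2 (le_max_left _ _)
    have hint : IntegrableOn (fun x => max (u' x - c) 0) C μ :=
      ((hu'i.integrableOn).sub
        (integrableOn_const hCf)).pos_part
    have hcheb : l / 2 * (μ (C ∩ X)).toReal ≤ ∫ x in C ∩ X, max (u' x - c) 0 ∂μ :=
      setIntegral_ge_of_const_le_real hDm hDf hpt (hint.mono_set Set.inter_subset_left)
    have hmono2 : ∫ x in C ∩ X, max (u' x - c) 0 ∂μ ≤ ∫ x in C, max (u' x - c) 0 ∂μ :=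
      setIntegral_mono_set hint
        (ae_restrict_of_ae (Eventually.of_forall fun x => le_max_right _ _))
        (HasSubset.Subset.eventuallyLE Set.inter_subset_left)
    have hg' : l / 2 * (μ (C ∩ X)).toReal ≤ ∫ x in C, g x ∂μ :=
      le_trans hcheb (le_trans hmono2 (hmain n C hCn))
    have htR : (μ (C ∩ X)).toReal ≤ 2 * l⁻¹ * ∫ x in C, g x ∂μ := by
      have h3 : (0 : ℝ) ≤ 2 * l⁻¹ := by positivity
      have h4 := mul_le_mul_of_nonneg_left hg' h3
      calc (μ (C ∩ X)).toReal = 2 * l⁻¹ * (l / 2 * (μ (C ∩ X)).toReal) := by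
            field_simp
        _ ≤ 2 * l⁻¹ * ∫ x in C, g x ∂μ := h4
    calc μ (C ∩ X) = ENNReal.ofReal ((μ (C ∩ X)).toReal) := (ENNReal.ofReal_toReal hDf).symm
      _ ≤ ENNReal.ofReal (2 * l⁻¹ * ∫ x in C, g x ∂μ) := ENNReal.ofReal_le_ofReal htR
      _ = ENNReal.ofReal (2 * l⁻¹) * ENNReal.ofReal (∫ x in C, g x ∂μ) :=
          ENNReal.ofReal_mul (mul_nonneg (by norm_num) (inv_nonneg.2 hl.le))
      _ ≤ ENNReal.ofReal (2 * l⁻¹) * ∫⁻ y in C, ENNReal.ofReal (g y) ∂μ := by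
          gcongr
          by_cases hgi : IntegrableOn g C μ
          · exact le_of_eq (ofReal_integral_eq_lintegral_ofReal hgi
              (ae_restrict_of_ae (Eventually.of_forall hg0)))
          · rw [integral_undef hgi, ENNReal.ofReal_zero]
            exact zero_le
      _ = ENNReal.ofReal 2 * ENNReal.ofReal l⁻¹ * ∫⁻ y in C, ENNReal.ofReal (g y) ∂μ := by
          rw [ENNReal.ofReal_mul (by norm_num)]
  have hae : X ≤ᵐ[μ] (E ∩ X : Set Ω) := by
    filter_upwards [ae_le_maximal F hv'i hv'0 hu'i hle] with x hx hxX
    refine ⟨?_, hxX⟩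
    have hs2 : s ≤ l / 2 := by
      rw [hsdef]
      apply div_le_div_of_nonneg_left hl.le (by norm_num)
      linarith
    have h1 : s < u' x := lt_of_le_of_lt (by linarith : s ≤ l) hxX
    exact lt_of_lt_of_le ((ENNReal.ofReal_lt_ofReal_iff_of_nonneg hs.le).2 h1) hx
  have hXE : μ X ≤ μ (E ∩ X) := measure_mono_ae hae
  have hiU : E = ⋃ C : 𝒮, (C : Set Ω) := by rw [← hunion, Set.sUnion_eq_iUnion]
  have hmeasC : ∀ C : 𝒮, MeasurableSet (C : Set Ω) := fun C => (hmem C C.2).1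
  have hpw : Pairwise (Function.onFun Disjoint fun C : 𝒮 => (C : Set Ω)) :=
    fun C D hne => hdisj C.2 D.2 (fun h => hne (Subtype.ext h))
  calc μ X ≤ μ (E ∩ X) := hXE
    _ = μ (⋃ C : 𝒮, ((C : Set Ω) ∩ X)) := by rw [hiU, Set.iUnion_inter]
    _ ≤ ∑' C : 𝒮, μ ((C : Set Ω) ∩ X) := measure_iUnion_le _
    _ ≤ ∑' C : 𝒮, ENNReal.ofReal 2 * ENNReal.ofReal l⁻¹ *
          ∫⁻ y in (C : Set Ω), ENNReal.ofReal (g y) ∂μ :=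
        ENNReal.tsum_le_tsum (fun C => hCb C C.2)
    _ = ENNReal.ofReal 2 * ENNReal.ofReal l⁻¹ *
          ∑' C : 𝒮, ∫⁻ y in (C : Set Ω), ENNReal.ofReal (g y) ∂μ := ENNReal.tsum_mul_left
    _ = ENNReal.ofReal 2 * ENNReal.ofReal l⁻¹ *
          ∫⁻ y in E, ENNReal.ofReal (g y) ∂μ := by
        rw [hiU, lintegral_iUnion hmeasC hpw]

end Avg

lemma lc_helper {α : Type} [MeasurableSpace α] (ν : Measure α) {h : α → ℝ}
    (hm : Measurable h) (h0 : ∀ x, 0 ≤ h x) {r : ℝ} (hr : 0 < r) :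
    ∫⁻ t in Set.Ioi (0 : ℝ), ν {x | t < h x} * ENNReal.ofReal (t ^ (r - 1)) =
      ENNReal.ofReal r⁻¹ * ∫⁻ x, ENNReal.ofReal (h x ^ r) ∂ν := by
  have hlc := lintegral_rpow_eq_lintegral_meas_lt_mul ν (Eventually.of_forall h0)
    hm.aemeasurable hr
  rw [hlc, ← mul_assoc, ← ENNReal.ofReal_mul (by positivity), inv_mul_cancel₀ hr.ne',
    ENNReal.ofReal_one, one_mul]

end StmtAux

theorem stmt4 (p N₀ : ℝ) (hp : 1 < p) (hN₀ : 1 ≤ N₀) :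
    ∃ N : ℝ, 0 < N ∧
    ∀ (Ω : Type) [MeasurableSpace Ω] (μ : Measure Ω) [SigmaFinite μ],
      μ Set.univ = ⊤ →
      ∀ (F : FiltrationOfPartitions Ω μ N₀) (u v g : Ω → ℝ),
        Integrable u μ → Integrable v μ →
        (∀ x, 0 ≤ g x) → Measurable g →
        (∀ x, 0 ≤ u x) → (∀ x, u x ≤ v x) →
        (∀ n : ℤ, ∀ C ∈ F.part n,
          ∫ x in C, max (u x - ⨍ y in C, v y ∂μ) 0 ∂μ ≤ ∫ x in C, g x ∂μ) →
        eLpNorm u (ENNReal.ofReal p) μ ^ p ≤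
          ENNReal.ofReal N * eLpNorm g (ENNReal.ofReal p) μ *
            eLpNorm v (ENNReal.ofReal p) μ ^ (p - 1) := by
  have hp0 : 0 < p := lt_trans zero_lt_one hp
  have hp1 : 0 < p - 1 := sub_pos.2 hp
  have hN₀0 : 0 < N₀ := lt_of_lt_of_le zero_lt_one hN₀
  set q : ℝ := p / (p - 1) with hqdef
  have hq0 : 0 < q := by positivity
  set c₁ : ℝ := 2 * p / (p - 1) * (2 * N₀) ^ (p - 1) with hc₁def
  set c₂ : ℝ := 2 * p / (p - 1) * 2 ^ (p - 1) with hc₂def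
  have hc₁0 : 0 < c₁ := by positivity
  have hc₂0 : 0 < c₂ := by positivity
  refine ⟨c₁ * c₂ ^ ((p - 1) / p), by positivity, ?_⟩
  intro Ω _inst μ _sf _hμtop F u v g hui hvi hg0 hgm hu0 huv hmain
  classical
  obtain ⟨u₀, hu₀m, hu₀ae⟩ : ∃ u₀, Measurable u₀ ∧ u =ᵐ[μ] u₀ :=
    ⟨hui.aemeasurable.mk u, hui.aemeasurable.measurable_mk, hui.aemeasurable.ae_eq_mk⟩
  obtain ⟨v₀, hv₀m, hv₀ae⟩ : ∃ v₀, Measurable v₀ ∧ v =ᵐ[μ] v₀ :=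
    ⟨hvi.aemeasurable.mk v, hvi.aemeasurable.measurable_mk, hvi.aemeasurable.ae_eq_mk⟩
  set u' : Ω → ℝ := fun x => max (u₀ x) 0 with hu'def
  set v' : Ω → ℝ := fun x => max (v₀ x) 0 with hv'def
  have hu'm : Measurable u' := hu₀m.max measurable_const
  have hv'm : Measurable v' := hv₀m.max measurable_const
  have hu'0 : ∀ x, 0 ≤ u' x := fun x => le_max_right _ _
  have hv'0 : ∀ x, 0 ≤ v' x := fun x => le_max_right _ _
  have hv0 : ∀ x, 0 ≤ v x := fun x => le_trans (hu0 x) (huv x)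
  have hu'ae : u =ᵐ[μ] u' := by
    filter_upwards [hu₀ae] with x hx
    show u x = max (u₀ x) 0
    rw [← hx, max_eq_left (hu0 x)]
  have hv'ae : v =ᵐ[μ] v' := by
    filter_upwards [hv₀ae] with x hx
    show v x = max (v₀ x) 0
    rw [← hx, max_eq_left (hv0 x)]
  have hu'i : Integrable u' μ := hui.congr hu'ae
  have hv'i : Integrable v' μ := hvi.congr hv'ae
  have huv' : u' ≤ᵐ[μ] v' := by
    filter_upwards [hu'ae, hv'ae] with x hx1 hx2
    rw [← hx1, ← hx2]
    exact huv x
  have hmain' : ∀ n : ℤ, ∀ C ∈ F.part n,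
      ∫ x in C, max (u' x - ⨍ y in C, v' y ∂μ) 0 ∂μ ≤ ∫ x in C, g x ∂μ := by
    intro n C hC
    have h1 : (⨍ y in C, v' y ∂μ) = ⨍ y in C, v y ∂μ := by
      rw [setAverage_eq, setAverage_eq]
      congr 1
      exact integral_congr_ae (ae_restrict_of_ae hv'ae.symm)
    have h2 : ∫ x in C, max (u' x - ⨍ y in C, v' y ∂μ) 0 ∂μ
        = ∫ x in C, max (u x - ⨍ y in C, v y ∂μ) 0 ∂μ := by
      rw [h1]
      apply integral_congr_ae
      filter_upwards [ae_restrict_of_ae hu'ae] with x hx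
      rw [hx]
    rw [h2]
    exact hmain n C hC
  set M : Ω → ℝ≥0∞ := F.maximal v' with hMdef
  have hMm : Measurable M := StmtAux.measurable_maximal F v'
  have hMtop : ∀ᵐ x ∂μ, M x < ⊤ := StmtAux.maximal_ae_lt_top F hv'i hv'0 hN₀
  set G : Ω → ℝ≥0∞ := fun x => ENNReal.ofReal (g x) with hGdef
  have hGm : Measurable G := hgm.ennreal_ofReal
  set V : Ω → ℝ≥0∞ := fun x => ENNReal.ofReal (v' x) with hVdef
  have hVm : Measurable V := hv'm.ennreal_ofReal
  set ν : Measure Ω := μ.withDensity G with hνdef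
  set ν' : Measure Ω := μ.withDensity V with hν'def
  set h₁ : Ω → ℝ := fun x => 2 * N₀ * (M x).toReal with hh₁def
  have hh₁m : Measurable h₁ := (hMm.ennreal_toReal).const_mul _
  have hh₁0 : ∀ x, 0 ≤ h₁ x := fun x => by
    have : (0:ℝ) ≤ (M x).toReal := ENNReal.toReal_nonneg
    positivity
  set T := ∫⁻ x, G x * M x ^ (p - 1) ∂μ with hTdef
  set Ig := ∫⁻ x, G x ^ p ∂μ with hIgdef
  set Iv := ∫⁻ x, V x ^ p ∂μ with hIvdef
  have hνtop : ∀ᵐ x ∂ν, M x < ⊤ := (withDensity_absolutelyContinuous μ G).ae_le hMtop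
  -- Step 1: distribution estimate, pointwise in t
  have hdist : ∀ t ∈ Set.Ioi (0 : ℝ), μ {a | t < u' a} * ENNReal.ofReal (t ^ (p - 1)) ≤
      ENNReal.ofReal 2 * (ν {x | t < h₁ x} * ENNReal.ofReal (t ^ (p - 2))) := by
    intro t ht
    have ht0 : 0 < t := ht
    have hEm : MeasurableSet {x | ENNReal.ofReal (t / (2 * N₀)) < M x} :=
      measurableSet_lt measurable_const hMm
    have h1 := StmtAux.dist_bound F hv'i hv'0 hN₀ hu'm hu'i hg0 hmain' huv' ht0
    have h1' : μ {a | t < u' a} ≤ ENNReal.ofReal 2 * ENNReal.ofReal t⁻¹ *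
        ν {x | ENNReal.ofReal (t / (2 * N₀)) < M x} := by
      rw [hνdef, withDensity_apply _ hEm]
      exact h1
    have h2 : ν {x | ENNReal.ofReal (t / (2 * N₀)) < M x} ≤ ν {x | t < h₁ x} := by
      apply measure_mono_ae
      filter_upwards [hνtop] with x hx hmem
      have hfin : M x ≠ ⊤ := hx.ne
      have h3 := (ENNReal.ofReal_lt_iff_lt_toReal (by positivity) hfin).1 hmem
      show t < h₁ x
      show t < 2 * N₀ * (M x).toReal
      rw [div_lt_iff₀ (by positivity)] at h3
      linarith [h3]
    have hpow : ENNReal.ofReal t⁻¹ * ENNReal.ofReal (t ^ (p - 1)) =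
        ENNReal.ofReal (t ^ (p - 2)) := by
      rw [← ENNReal.ofReal_mul (by positivity)]
      congr 1
      rw [show p - 2 = -1 + (p - 1) by ring, Real.rpow_add ht0, Real.rpow_neg_one]
    calc μ {a | t < u' a} * ENNReal.ofReal (t ^ (p - 1))
        ≤ ENNReal.ofReal 2 * ENNReal.ofReal t⁻¹ * ν {x | t < h₁ x} *
            ENNReal.ofReal (t ^ (p - 1)) :=
          mul_le_mul_left (h1'.trans (mul_le_mul_right h2 _)) _
      _ = ENNReal.ofReal 2 * (ν {x | t < h₁ x} *
            (ENNReal.ofReal t⁻¹ * ENNReal.ofReal (t ^ (p - 1)))) := by ring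
      _ = ENNReal.ofReal 2 * (ν {x | t < h₁ x} * ENNReal.ofReal (t ^ (p - 2))) := by
          rw [hpow]
  have hLCu := lintegral_rpow_eq_lintegral_meas_lt_mul μ (Eventually.of_forall hu'0)
    hu'm.aemeasurable hp0
  have hIu1 : ∫⁻ x, ENNReal.ofReal (u' x ^ p) ∂μ ≤ ENNReal.ofReal c₁ * T := by
    have hmono := lintegral_mono_ae (μ := (volume : Measure ℝ).restrict (Set.Ioi 0))
      ((ae_restrict_iff' measurableSet_Ioi).2 (Eventually.of_forall hdist))
    have hLC1 := StmtAux.lc_helper ν hh₁m hh₁0 hp1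
    rw [show p - 1 - 1 = p - 2 by ring] at hLC1
    have hwd : ∫⁻ x, ENNReal.ofReal (h₁ x ^ (p - 1)) ∂ν =
        ENNReal.ofReal ((2 * N₀) ^ (p - 1)) * T := by
      rw [hνdef, lintegral_withDensity_eq_lintegral_mul _ hGm
        (hh₁m.pow_const _).ennreal_ofReal]
      rw [hTdef, ← lintegral_const_mul' _ _ ENNReal.ofReal_ne_top]
      apply lintegral_congr_ae
      filter_upwards [hMtop] with x hx
      show G x * ENNReal.ofReal (h₁ x ^ (p - 1)) =
        ENNReal.ofReal ((2 * N₀) ^ (p - 1)) * (G x * M x ^ (p - 1))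
      have hm0 : (0:ℝ) ≤ (M x).toReal := ENNReal.toReal_nonneg
      show G x * ENNReal.ofReal ((2 * N₀ * (M x).toReal) ^ (p - 1)) =
        ENNReal.ofReal ((2 * N₀) ^ (p - 1)) * (G x * M x ^ (p - 1))
      rw [Real.mul_rpow (by positivity) hm0, ENNReal.ofReal_mul (by positivity),
        ← ENNReal.ofReal_rpow_of_nonneg hm0 hp1.le, ENNReal.ofReal_toReal hx.ne]
      ring
    have hcr : c₁ = p * 2 * (p - 1)⁻¹ * ((2 * N₀) ^ (p - 1)) := by
      rw [hc₁def]
      field_simp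
    have hn1 : (0:ℝ) ≤ p * 2 := by linarith
    have hn2 : (0:ℝ) ≤ p * 2 * (p - 1)⁻¹ := mul_nonneg hn1 (inv_nonneg.2 hp1.le)
    have hconst : ENNReal.ofReal c₁ = ENNReal.ofReal p * ENNReal.ofReal 2 *
        ENNReal.ofReal (p - 1)⁻¹ * ENNReal.ofReal ((2 * N₀) ^ (p - 1)) := by
      rw [hcr, ENNReal.ofReal_mul hn2, ENNReal.ofReal_mul hn1, ENNReal.ofReal_mul hp0.le]
    calc ∫⁻ x, ENNReal.ofReal (u' x ^ p) ∂μ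
        = ENNReal.ofReal p * ∫⁻ t in Set.Ioi (0:ℝ),
            μ {a | t < u' a} * ENNReal.ofReal (t ^ (p - 1)) := hLCu
      _ ≤ ENNReal.ofReal p * ∫⁻ t in Set.Ioi (0:ℝ),
            ENNReal.ofReal 2 * (ν {x | t < h₁ x} * ENNReal.ofReal (t ^ (p - 2))) :=
          mul_le_mul_right hmono _
      _ = ENNReal.ofReal p * (ENNReal.ofReal 2 *
            ∫⁻ t in Set.Ioi (0:ℝ), ν {x | t < h₁ x} * ENNReal.ofReal (t ^ (p - 2))) := by
          rw [lintegral_const_mul' _ _ ENNReal.ofReal_ne_top]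
      _ = ENNReal.ofReal p * (ENNReal.ofReal 2 * (ENNReal.ofReal (p - 1)⁻¹ *
            (ENNReal.ofReal ((2 * N₀) ^ (p - 1)) * T))) := by
          rw [hLC1, hwd]
      _ = (ENNReal.ofReal p * ENNReal.ofReal 2 * ENNReal.ofReal (p - 1)⁻¹ *
            ENNReal.ofReal ((2 * N₀) ^ (p - 1))) * T := by ring
      _ = ENNReal.ofReal c₁ * T := by rw [hconst]
  -- Step 2: Hölder
  have hpq : p.HolderConjugate q := Real.HolderConjugate.conjExponent hp
  have hS2 : T ≤ Ig ^ (1/p) * (∫⁻ x, M x ^ p ∂μ) ^ (1/q) := by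
    have hH := ENNReal.lintegral_mul_le_Lp_mul_Lq μ hpq hGm.aemeasurable
      (hMm.pow_const (p - 1)).aemeasurable
    have hrweq : ∫⁻ x, (M x ^ (p - 1)) ^ q ∂μ = ∫⁻ x, M x ^ p ∂μ := by
      apply lintegral_congr
      intro x
      rw [← ENNReal.rpow_mul]
      congr 1
      rw [hqdef]
      field_simp
    calc T = ∫⁻ a, (G * fun x => M x ^ (p - 1)) a ∂μ := by
          apply lintegral_congr
          intro x
          rfl
      _ ≤ (∫⁻ a, G a ^ p ∂μ) ^ (1/p) * (∫⁻ a, (M a ^ (p - 1)) ^ q ∂μ) ^ (1/q) := hH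
      _ = Ig ^ (1/p) * (∫⁻ x, M x ^ p ∂μ) ^ (1/q) := by rw [hrweq]
  -- Step 3: maximal function Lp bound
  have hdist2 : ∀ t ∈ Set.Ioi (0:ℝ),
      μ {a | t < (M a).toReal} * ENNReal.ofReal (t ^ (p - 1)) ≤
      ENNReal.ofReal 2 * (ν' {x | t < 2 * v' x} * ENNReal.ofReal (t ^ (p - 2))) := by
    intro t ht
    have ht0 : 0 < t := ht
    have hsetm : MeasurableSet {x | t < 2 * v' x} :=
      measurableSet_lt measurable_const (hv'm.const_mul 2)
    have hsub : {a | t < (M a).toReal} ⊆ {a | ENNReal.ofReal t < M a} := by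
      intro a ha
      simp only [Set.mem_setOf_eq] at ha ⊢
      by_cases htop : M a = ⊤
      · rw [htop]; exact ENNReal.ofReal_lt_top
      · exact (ENNReal.ofReal_lt_iff_lt_toReal ht0.le htop).2 ha
    have h1 := StmtAux.weak_bound' F hv'i hv'0 hv'm hN₀ ht0
    have hseteq : {x | t / 2 < v' x} = {x | t < 2 * v' x} := by
      ext x
      simp only [Set.mem_setOf_eq]
      constructor <;> intro h <;> linarith
    have h2 : μ {a | t < (M a).toReal} ≤
        ENNReal.ofReal 2 * ENNReal.ofReal t⁻¹ * ν' {x | t < 2 * v' x} := by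
      refine (measure_mono hsub).trans (h1.trans ?_)
      rw [hν'def, withDensity_apply _ hsetm, ← hseteq]
    have hpow : ENNReal.ofReal t⁻¹ * ENNReal.ofReal (t ^ (p - 1)) =
        ENNReal.ofReal (t ^ (p - 2)) := by
      rw [← ENNReal.ofReal_mul (by positivity)]
      congr 1
      rw [show p - 2 = -1 + (p - 1) by ring, Real.rpow_add ht0, Real.rpow_neg_one]
    calc μ {a | t < (M a).toReal} * ENNReal.ofReal (t ^ (p - 1))
        ≤ ENNReal.ofReal 2 * ENNReal.ofReal t⁻¹ * ν' {x | t < 2 * v' x} *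
            ENNReal.ofReal (t ^ (p - 1)) := mul_le_mul_left h2 _
      _ = ENNReal.ofReal 2 * (ν' {x | t < 2 * v' x} *
            (ENNReal.ofReal t⁻¹ * ENNReal.ofReal (t ^ (p - 1)))) := by ring
      _ = ENNReal.ofReal 2 * (ν' {x | t < 2 * v' x} * ENNReal.ofReal (t ^ (p - 2))) := by
          rw [hpow]
  have hJmeq : ∫⁻ x, M x ^ p ∂μ = ∫⁻ x, ENNReal.ofReal ((M x).toReal ^ p) ∂μ := by
    apply lintegral_congr_ae
    filter_upwards [hMtop] with x hx
    rw [← ENNReal.ofReal_rpow_of_nonneg ENNReal.toReal_nonneg hp0.le,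
      ENNReal.ofReal_toReal hx.ne]
  have hS3 : ∫⁻ x, M x ^ p ∂μ ≤ ENNReal.ofReal c₂ * Iv := by
    have hLCm := lintegral_rpow_eq_lintegral_meas_lt_mul μ
      (Eventually.of_forall (fun x => ENNReal.toReal_nonneg))
      hMm.ennreal_toReal.aemeasurable hp0
    have hmono := lintegral_mono_ae (μ := (volume : Measure ℝ).restrict (Set.Ioi 0))
      ((ae_restrict_iff' measurableSet_Ioi).2 (Eventually.of_forall hdist2))
    have hLC2 := StmtAux.lc_helper ν' (hv'm.const_mul 2)
      (fun x => mul_nonneg (by norm_num) (hv'0 x)) hp1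
    rw [show p - 1 - 1 = p - 2 by ring] at hLC2
    have hwd2 : ∫⁻ x, ENNReal.ofReal ((2 * v' x) ^ (p - 1)) ∂ν' =
        ENNReal.ofReal (2 ^ (p - 1)) * Iv := by
      rw [hν'def, lintegral_withDensity_eq_lintegral_mul _ hVm
        ((hv'm.const_mul 2).pow_const _).ennreal_ofReal]
      rw [hIvdef, ← lintegral_const_mul' _ _ ENNReal.ofReal_ne_top]
      apply lintegral_congr
      intro x
      show V x * ENNReal.ofReal ((2 * v' x) ^ (p - 1)) =
        ENNReal.ofReal (2 ^ (p - 1)) * V x ^ p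
      rw [Real.mul_rpow (by norm_num) (hv'0 x), ENNReal.ofReal_mul
        (Real.rpow_nonneg (by norm_num) _)]
      by_cases hvx : v' x = 0
      · show ENNReal.ofReal (v' x) * _ = _ * ENNReal.ofReal (v' x) ^ p
        rw [hvx]
        simp [Real.zero_rpow hp1.ne', ENNReal.zero_rpow_of_pos hp0]
      · have hvpos : 0 < v' x := lt_of_le_of_ne (hv'0 x) (Ne.symm hvx)
        show ENNReal.ofReal (v' x) * _ = _ * ENNReal.ofReal (v' x) ^ p
        have hx0 : ENNReal.ofReal (v' x) ≠ 0 := (ENNReal.ofReal_pos.2 hvpos).ne'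
        have hxt : ENNReal.ofReal (v' x) ≠ ⊤ := ENNReal.ofReal_ne_top
        have hsplit : ENNReal.ofReal (v' x) ^ p =
            ENNReal.ofReal (v' x) ^ (1:ℝ) * ENNReal.ofReal (v' x) ^ (p - 1) := by
          rw [← ENNReal.rpow_add _ _ hx0 hxt]
          norm_num
        rw [hsplit, ENNReal.rpow_one, ← ENNReal.ofReal_rpow_of_nonneg (hv'0 x) hp1.le]
        ring
    have hcr : c₂ = p * 2 * (p - 1)⁻¹ * (2 ^ (p - 1)) := by
      rw [hc₂def]
      field_simp
    have hn1 : (0:ℝ) ≤ p * 2 := by linarith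
    have hn2 : (0:ℝ) ≤ p * 2 * (p - 1)⁻¹ := mul_nonneg hn1 (inv_nonneg.2 hp1.le)
    have hconst : ENNReal.ofReal c₂ = ENNReal.ofReal p * ENNReal.ofReal 2 *
        ENNReal.ofReal (p - 1)⁻¹ * ENNReal.ofReal (2 ^ (p - 1)) := by
      rw [hcr, ENNReal.ofReal_mul hn2, ENNReal.ofReal_mul hn1, ENNReal.ofReal_mul hp0.le]
    calc ∫⁻ x, M x ^ p ∂μ
        = ∫⁻ x, ENNReal.ofReal ((M x).toReal ^ p) ∂μ := hJmeq
      _ = ENNReal.ofReal p * ∫⁻ t in Set.Ioi (0:ℝ),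
            μ {a | t < (M a).toReal} * ENNReal.ofReal (t ^ (p - 1)) := hLCm
      _ ≤ ENNReal.ofReal p * ∫⁻ t in Set.Ioi (0:ℝ),
            ENNReal.ofReal 2 * (ν' {x | t < 2 * v' x} * ENNReal.ofReal (t ^ (p - 2))) :=
          mul_le_mul_right hmono _
      _ = ENNReal.ofReal p * (ENNReal.ofReal 2 *
            ∫⁻ t in Set.Ioi (0:ℝ), ν' {x | t < 2 * v' x} * ENNReal.ofReal (t ^ (p - 2))) := by
          rw [lintegral_const_mul' _ _ ENNReal.ofReal_ne_top]
      _ = ENNReal.ofReal p * (ENNReal.ofReal 2 * (ENNReal.ofReal (p - 1)⁻¹ *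
            (ENNReal.ofReal (2 ^ (p - 1)) * Iv))) := by rw [hLC2, hwd2]
      _ = (ENNReal.ofReal p * ENNReal.ofReal 2 * ENNReal.ofReal (p - 1)⁻¹ *
            ENNReal.ofReal (2 ^ (p - 1))) * Iv := by ring
      _ = ENNReal.ofReal c₂ * Iv := by rw [hconst]
  -- eLpNorm identities
  have hofp0 : (ENNReal.ofReal p) ≠ 0 := (ENNReal.ofReal_pos.2 hp0).ne'
  have hofpt : (ENNReal.ofReal p) ≠ ⊤ := ENNReal.ofReal_ne_top
  have htoReal : (ENNReal.ofReal p).toReal = p := ENNReal.toReal_ofReal hp0.le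
  have hnorm_u : eLpNorm u (ENNReal.ofReal p) μ ^ p = ∫⁻ x, ENNReal.ofReal (u' x ^ p) ∂μ := by
    rw [eLpNorm_eq_lintegral_rpow_enorm_toReal hofp0 hofpt, htoReal, ← ENNReal.rpow_mul,
      one_div_mul_cancel hp0.ne', ENNReal.rpow_one]
    apply lintegral_congr_ae
    filter_upwards [hu'ae] with x hx
    rw [Real.enorm_eq_ofReal (hu0 x), hx, ENNReal.ofReal_rpow_of_nonneg (hu'0 x) hp0.le]
  have hnorm_g : eLpNorm g (ENNReal.ofReal p) μ = Ig ^ (1/p) := by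
    rw [eLpNorm_eq_lintegral_rpow_enorm_toReal hofp0 hofpt, htoReal]
    congr 1
    apply lintegral_congr
    intro x
    rw [Real.enorm_eq_ofReal (hg0 x)]
  have hnorm_v : eLpNorm v (ENNReal.ofReal p) μ = Iv ^ (1/p) := by
    rw [eLpNorm_eq_lintegral_rpow_enorm_toReal hofp0 hofpt, htoReal]
    congr 1
    apply lintegral_congr_ae
    filter_upwards [hv'ae] with x hx
    rw [Real.enorm_eq_ofReal (hv0 x), hx]
  have h1q : 1 / q = (p - 1) / p := by rw [hqdef, one_div_div]
  have h1qnn : (0:ℝ) ≤ 1 / q := le_of_lt (by positivity)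
  calc eLpNorm u (ENNReal.ofReal p) μ ^ p
      = ∫⁻ x, ENNReal.ofReal (u' x ^ p) ∂μ := hnorm_u
    _ ≤ ENNReal.ofReal c₁ * T := hIu1
    _ ≤ ENNReal.ofReal c₁ * (Ig ^ (1/p) * (∫⁻ x, M x ^ p ∂μ) ^ (1/q)) :=
        mul_le_mul_right hS2 _
    _ ≤ ENNReal.ofReal c₁ * (Ig ^ (1/p) * (ENNReal.ofReal c₂ * Iv) ^ (1/q)) :=
        mul_le_mul_right (mul_le_mul_right (ENNReal.rpow_le_rpow hS3 h1qnn) _) _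
    _ = (ENNReal.ofReal c₁ * ENNReal.ofReal (c₂ ^ ((p - 1) / p))) *
          (Ig ^ (1/p) * Iv ^ ((p - 1) / p)) := by
        rw [ENNReal.mul_rpow_of_nonneg _ _ h1qnn,
          ENNReal.ofReal_rpow_of_nonneg hc₂0.le h1qnn, h1q]
        ring
    _ = ENNReal.ofReal (c₁ * c₂ ^ ((p - 1) / p)) * eLpNorm g (ENNReal.ofReal p) μ *
          eLpNorm v (ENNReal.ofReal p) μ ^ (p - 1) := by
        rw [hnorm_g, hnorm_v, ENNReal.ofReal_mul hc₁0.le, ← ENNReal.rpow_mul,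
          show 1/p * (p - 1) = (p - 1) / p by ring]
        ring
end

section
/- Let κ ≥ 4 and for r ∈ ℕ set Q_r = (κ^{-r}/2, κ^{-r})² ⊂ ℝ². If Q = I × J is a square that intersects Q_τ for some minimal integer τ ≥ 0, then for every integer i ≥ τ+1 with Q ∩ Q_i ≠ ∅, both side lengths of Q are at least κ^{-τ}/4, and consequently |Q ∩ Q_i| ≤ 4 κ^{2τ-2i}|Q|; hence Σ_{i=τ+1}^∞ |Q ∩ Q_i| ≤ 4(κ²-1)^{-1}|Q|. -/
open MeasureTheory
open scoped ENNReal

/-- The square `Q_r = (κ^{-r}/2, κ^{-r})² ⊂ ℝ²`. -/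
def Qr (κ : ℝ) (r : ℕ) : Set (ℝ × ℝ) :=
  Set.Ioo (κ ^ (-(r : ℤ)) / 2) (κ ^ (-(r : ℤ))) ×ˢ
    Set.Ioo (κ ^ (-(r : ℤ)) / 2) (κ ^ (-(r : ℤ)))

theorem stmt10 (κ : ℝ) (hκ : 4 ≤ κ) (a b s : ℝ) (hs : 0 < s)
    (Q : Set (ℝ × ℝ)) (hQ : Q = Set.Ioo a (a + s) ×ˢ Set.Ioo b (b + s))
    (τ : ℕ) (hτ : (Q ∩ Qr κ τ).Nonempty) (hmin : ∀ k : ℕ, k < τ → Q ∩ Qr κ k = ∅) :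
    (∀ i : ℕ, τ + 1 ≤ i → (Q ∩ Qr κ i).Nonempty →
      κ ^ (-(τ : ℤ)) / 4 ≤ s ∧
      volume (Q ∩ Qr κ i) ≤
        ENNReal.ofReal (4 * κ ^ (2 * (τ : ℤ) - 2 * (i : ℤ))) * volume Q) ∧
    ∑' i : ℕ, volume (Q ∩ Qr κ (τ + 1 + i)) ≤
      ENNReal.ofReal (4 / (κ ^ 2 - 1)) * volume Q := by
  have hκ0 : (0:ℝ) < κ := by linarith
  have hκ1 : (1:ℝ) ≤ κ := by linarith
  have hne : κ ≠ 0 := ne_of_gt hκ0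
  set t : ℝ := κ ^ (-(τ:ℤ)) with ht
  have ht0 : 0 < t := zpow_pos hκ0 _
  have hvolQ : volume Q = ENNReal.ofReal s * ENNReal.ofReal s := by
    rw [hQ, Measure.volume_eq_prod, Measure.prod_prod, Real.volume_Ioo, Real.volume_Ioo,
      add_sub_cancel_left, add_sub_cancel_left]
  have hvolQr : ∀ i : ℕ, volume (Qr κ i) =
      ENNReal.ofReal (κ ^ (-(i:ℤ)) / 2) * ENNReal.ofReal (κ ^ (-(i:ℤ)) / 2) := by
    intro i
    rw [Qr, Measure.volume_eq_prod, Measure.prod_prod, Real.volume_Ioo, sub_half]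
  -- part 1
  have part1 : ∀ i : ℕ, τ + 1 ≤ i → (Q ∩ Qr κ i).Nonempty →
      t / 4 ≤ s ∧
      volume (Q ∩ Qr κ i) ≤
        ENNReal.ofReal (4 * κ ^ (2 * (τ : ℤ) - 2 * (i : ℤ))) * volume Q := by
    intro i hi hne'
    obtain ⟨q, hqQ, hqi⟩ := hne'
    obtain ⟨p, hpQ, hpτ⟩ := hτ
    rw [hQ] at hpQ hqQ
    -- κ^{-i} ≤ t/4
    have hui : κ ^ (-(i:ℤ)) ≤ t / 4 := by
      have h1 : κ ^ (-(i:ℤ)) ≤ κ ^ (-(τ:ℤ) - 1) := by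
        apply zpow_le_zpow_right₀ hκ1
        omega
      have h2 : κ ^ (-(τ:ℤ) - 1) = t / κ := by
        rw [zpow_sub₀ hne, zpow_one]
      have h3 : t / κ ≤ t / 4 := by
        apply div_le_div_of_nonneg_left ht0.le (by norm_num) hκ
      linarith
    have hui0 : 0 < κ ^ (-(i:ℤ)) := zpow_pos hκ0 _
    have hp1 : p.1 ∈ Set.Ioo a (a + s) := hpQ.1
    have hq1 : q.1 ∈ Set.Ioo a (a + s) := hqQ.1
    have hp1' : p.1 ∈ Set.Ioo (t/2) t := hpτ.1
    have hq1' : q.1 ∈ Set.Ioo (κ ^ (-(i:ℤ)) / 2) (κ ^ (-(i:ℤ))) := hqi.1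
    have hs4 : t / 4 ≤ s := by
      have := hp1.2; have := hp1'.1; have := hq1.1; have := hq1'.2
      linarith
    refine ⟨hs4, ?_⟩
    have hc0 : (0:ℝ) < κ ^ (2 * (τ : ℤ) - 2 * (i : ℤ)) := zpow_pos hκ0 _
    have hu2 : κ ^ (-(i:ℤ)) * κ ^ (-(i:ℤ)) =
        κ ^ (2 * (τ : ℤ) - 2 * (i : ℤ)) * (t * t) := by
      rw [ht, ← zpow_add₀ hne, ← zpow_add₀ hne, ← zpow_add₀ hne]
      congr 1
      ring
    have hreal : κ ^ (-(i:ℤ)) / 2 * (κ ^ (-(i:ℤ)) / 2) ≤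
        4 * κ ^ (2 * (τ : ℤ) - 2 * (i : ℤ)) * (s * s) := by
      have hss : t/4 * (t/4) ≤ s * s :=
        mul_le_mul hs4 hs4 (by linarith) (by linarith)
      nlinarith [mul_le_mul_of_nonneg_left hss hc0.le]
    calc volume (Q ∩ Qr κ i) ≤ volume (Qr κ i) :=
          measure_mono Set.inter_subset_right
      _ = ENNReal.ofReal (κ ^ (-(i:ℤ)) / 2 * (κ ^ (-(i:ℤ)) / 2)) := by
          rw [hvolQr i, ← ENNReal.ofReal_mul (by positivity)]
      _ ≤ ENNReal.ofReal (4 * κ ^ (2 * (τ : ℤ) - 2 * (i : ℤ)) * (s * s)) :=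
          ENNReal.ofReal_le_ofReal hreal
      _ = ENNReal.ofReal (4 * κ ^ (2 * (τ : ℤ) - 2 * (i : ℤ))) * volume Q := by
          rw [hvolQ, ← ENNReal.ofReal_mul hs.le, ← ENNReal.ofReal_mul (by positivity)]
  refine ⟨part1, ?_⟩
  -- part 2
  set r : ℝ := κ ^ (-(2:ℤ)) with hr
  have hr0 : 0 < r := zpow_pos hκ0 _
  have hrval : r = (κ * κ)⁻¹ := by
    rw [hr, zpow_neg, show ((2:ℤ)) = ((2:ℕ):ℤ) by norm_num, zpow_natCast, sq]
  have hr1 : r < 1 := by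
    rw [hrval]
    rw [inv_lt_one_iff₀]
    right; nlinarith
  have hterm : ∀ i : ℕ, (4:ℝ) * κ ^ (2 * (τ:ℤ) - 2 * ((τ + 1 + i : ℕ) : ℤ)) = 4 * r * r ^ i := by
    intro i
    have : (2 * (τ:ℤ) - 2 * ((τ + 1 + i : ℕ) : ℤ)) = (-(2:ℤ)) * ((i:ℤ) + 1) := by
      push_cast; ring
    rw [this, zpow_mul, hr]
    rw [show ((i:ℤ) + 1) = ((i + 1 : ℕ) : ℤ) by push_cast; ring, zpow_natCast]
    ring
  have bound2 : ∀ i : ℕ, volume (Q ∩ Qr κ (τ + 1 + i)) ≤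
      ENNReal.ofReal (4 * r * r ^ i) * volume Q := by
    intro i
    rcases Set.eq_empty_or_nonempty (Q ∩ Qr κ (τ + 1 + i)) with h | h
    · rw [h]; simp
    · have := (part1 (τ + 1 + i) (by omega) h).2
      rwa [hterm i] at this
  have hsum : ∑' i : ℕ, volume (Q ∩ Qr κ (τ + 1 + i)) ≤
      (∑' i : ℕ, ENNReal.ofReal (4 * r * r ^ i)) * volume Q := by
    rw [← ENNReal.tsum_mul_right]
    exact ENNReal.tsum_le_tsum bound2
  have hgeo : (∑' i : ℕ, ENNReal.ofReal (4 * r * r ^ i)) =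
      ENNReal.ofReal (4 / (κ ^ 2 - 1)) := by
    have h1 : ∀ i : ℕ, ENNReal.ofReal (4 * r * r ^ i) =
        ENNReal.ofReal (4 * r) * (ENNReal.ofReal r) ^ i := by
      intro i
      rw [← ENNReal.ofReal_pow hr0.le, ← ENNReal.ofReal_mul (by positivity)]
    simp_rw [h1]
    rw [ENNReal.tsum_mul_left, ENNReal.tsum_geometric]
    have h2 : (1 : ℝ≥0∞) - ENNReal.ofReal r = ENNReal.ofReal (1 - r) := by
      rw [ENNReal.ofReal_sub _ hr0.le, ENNReal.ofReal_one]
    rw [h2, ← ENNReal.ofReal_inv_of_pos (by linarith), ← ENNReal.ofReal_mul (by positivity)]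
    congr 1
    rw [hrval]
    have hκκ : κ * κ ≠ 0 := by positivity
    have h3 : κ ^ 2 - 1 ≠ 0 := by nlinarith
    have h3' : (-1 + κ ^ 2) ≠ 0 := by intro h; apply h3; linarith
    field_simp
  rw [hgeo] at hsum
  exact hsum
end

section
/- For any f ∈ L¹ of a measure space with a filtration of partitions and any p ∈ (1, ∞), the maximal function Mf = sup_{n∈ℤ} |f|_{|n} satisfies ‖Mf‖_{L^p} ≤ (p/(p-1)) ‖f‖_{L^p}. -/
open MeasureTheory Filter
open scoped ENNReal Topology

namespace FiltrationOfPartitions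

variable {Ω : Type} [MeasurableSpace Ω] {μ : Measure Ω} {N₀ : ℝ}
variable (F : FiltrationOfPartitions Ω μ N₀)

lemma elem_eq {n : ℤ} {C : Set Ω} (hC : C ∈ F.part n) {x : Ω} (hx : x ∈ C) :
    F.elem n x = C := by
  by_contra h
  exact Set.disjoint_left.1 (F.disj n (F.elem_mem n x).1 hC h) (F.elem_mem n x).2 hx

lemma elem_subset_s12 {m n : ℤ} (h : m ≤ n) (x : Ω) : F.elem n x ⊆ F.elem m x := by
  refine Int.le_induction (motive := fun n _ => F.elem n x ⊆ F.elem m x) subset_rfl ?_ n h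
  intro k _ ih
  have h2 := F.nested (k + 1) x
  simp only [add_sub_cancel_right] at h2
  exact h2.trans ih

lemma measurable_comp_elem (n : ℤ) (φ : Set Ω → ℝ≥0∞) :
    Measurable fun x => φ (F.elem n x) := by
  intro s _
  have h : (fun x => φ (F.elem n x)) ⁻¹' s = ⋃ C ∈ {C | C ∈ F.part n ∧ φ C ∈ s}, C := by
    ext x
    simp only [Set.mem_preimage, Set.mem_iUnion, Set.mem_setOf_eq, exists_prop]
    constructor
    · intro h
      exact ⟨F.elem n x, ⟨(F.elem_mem n x).1, h⟩, (F.elem_mem n x).2⟩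
    · rintro ⟨C, ⟨hC, hφ⟩, hx⟩
      rwa [F.elem_eq hC hx]
  rw [h]
  exact MeasurableSet.biUnion ((F.countable n).mono fun C hC => hC.1)
    fun C hC => F.meas n C hC.1

lemma measurable_maximal (g : Ω → ℝ) : Measurable (F.maximal g) :=
  Measurable.iSup fun n => F.measurable_comp_elem n
    (fun C => ENNReal.ofReal (⨍ y in C, g y ∂μ))

lemma weak_ineq (f : Ω → ℝ) (hf : Integrable f μ) {l : ℝ} (hl : 0 < l) :
    ENNReal.ofReal l * μ {x | ENNReal.ofReal l < F.maximal (fun y => |f y|) x} ≤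
      ∫⁻ x in {x | ENNReal.ofReal l < F.maximal (fun y => |f y|) x}, ‖f x‖₊ ∂μ := by
  set g : Ω → ℝ := fun y => |f y| with hgdef
  have hgint : Integrable g μ := hf.abs
  have hgnn : ∀ y, 0 ≤ g y := fun y => abs_nonneg _
  set E := {x | ENNReal.ofReal l < F.maximal g x} with hE
  set a : ℤ → Ω → ℝ := fun n x => ⨍ y in F.elem n x, g y ∂μ with ha
  have hconst : ∀ n : ℤ, ∀ x y : Ω, y ∈ F.elem n x → a n y = a n x := by
    intro n x y hy
    simp only [ha]
    rw [F.elem_eq (F.elem_mem n x).1 hy]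
  set I : ℝ := ∫ y, g y ∂μ with hI
  have hI0 : 0 ≤ I := integral_nonneg hgnn
  obtain ⟨m, hm⟩ := F.large ((I + 1) / l)
  have hsmall : ∀ n ≤ m, ∀ x, a n x < l := by
    intro n hn x
    have hC := (F.elem_mem n x).1
    have h1 : ENNReal.ofReal ((I + 1) / l) ≤ μ (F.elem n x) := hm n hn _ hC
    have hfin : μ (F.elem n x) ≠ ⊤ := (F.finite n _ hC).ne
    have h2 : (I + 1) / l ≤ (μ (F.elem n x)).toReal :=
      (ENNReal.ofReal_le_iff_le_toReal hfin).1 h1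
    have h3 : ∫ y in F.elem n x, g y ∂μ ≤ I :=
      setIntegral_le_integral hgint (Eventually.of_forall hgnn)
    have key : a n x ≤ ((I + 1) / l)⁻¹ * I := by
      simp only [ha]
      rw [setAverage_eq, smul_eq_mul]
      calc (μ (F.elem n x)).toReal⁻¹ * ∫ y in F.elem n x, g y ∂μ
          ≤ (μ (F.elem n x)).toReal⁻¹ * I :=
            mul_le_mul_of_nonneg_left h3 (by positivity)
        _ ≤ ((I + 1) / l)⁻¹ * I :=
            mul_le_mul_of_nonneg_right (inv_anti₀ (by positivity) h2) hI0
    refine lt_of_le_of_lt key ?_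
    rw [inv_div, div_mul_eq_mul_div, div_lt_iff₀ (by positivity)]
    nlinarith
  have hsel : ∀ x : Ω, ∃ n : ℤ, x ∈ E →
      (l < a n x ∧ ∀ k : ℤ, l < a k x → n ≤ k) := by
    intro x
    by_cases hx : x ∈ E
    · have hex : ∃ k : ℤ, l < a k x := by
        have hx' := hx
        rw [hE, Set.mem_setOf_eq, FiltrationOfPartitions.maximal, lt_iSup_iff] at hx'
        obtain ⟨n, hn⟩ := hx'
        exact ⟨n, (ENNReal.ofReal_lt_ofReal_iff_of_nonneg hl.le).1 hn⟩
      obtain ⟨n, hn1, hn2⟩ := Int.exists_least_of_bdd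
        (Hbdd := ⟨m + 1, fun k hk => by
          by_contra hk'
          push_neg at hk'
          exact absurd hk (not_lt.2 (hsmall k (by omega) x).le)⟩) hex
      exact ⟨n, fun _ => ⟨hn1, hn2⟩⟩
    · exact ⟨0, fun h => absurd h hx⟩
  choose ν hν using hsel
  set 𝒞 : Set (Set Ω) := (fun x => F.elem (ν x) x) '' E with hC𝒞
  have hCmeas : ∀ C ∈ 𝒞, MeasurableSet C := by
    rintro C ⟨x, hx, rfl⟩
    exact F.meas _ _ (F.elem_mem _ x).1
  have hCcount : 𝒞.Countable := by
    refine Set.Countable.mono ?_ (Set.countable_iUnion F.countable)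
    rintro C ⟨x, hx, rfl⟩
    exact Set.mem_iUnion.2 ⟨ν x, (F.elem_mem _ x).1⟩
  have hCsub : ∀ C ∈ 𝒞, C ⊆ E := by
    rintro C ⟨x, hx, rfl⟩ y hy
    have h1 := (hν x hx).1
    have heq : a (ν x) y = a (ν x) x := hconst (ν x) x y hy
    rw [hE, Set.mem_setOf_eq]
    refine lt_of_lt_of_le ?_ (le_iSup (fun n => ENNReal.ofReal (a n y)) (ν x))
    rw [heq]
    exact (ENNReal.ofReal_lt_ofReal_iff_of_nonneg hl.le).2 h1
  have hkey : ∀ C ∈ 𝒞, ENNReal.ofReal l * μ C ≤ ∫⁻ x in C, (‖f x‖₊ : ℝ≥0∞) ∂μ := by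
    rintro C ⟨x, hx, rfl⟩
    have hC := (F.elem_mem (ν x) x).1
    have hfin := (F.finite _ _ hC).ne
    have hTpos : 0 < (μ (F.elem (ν x) x)).toReal :=
      ENNReal.toReal_pos (F.pos _ _ hC).ne' hfin
    have h1 : l < a (ν x) x := (hν x hx).1
    have h2 : l * (μ (F.elem (ν x) x)).toReal < ∫ y in F.elem (ν x) x, g y ∂μ := by
      simp only [ha] at h1
      rw [setAverage_eq, smul_eq_mul, inv_mul_eq_div] at h1
      exact (lt_div_iff₀ hTpos).1 h1
    calc ENNReal.ofReal l * μ (F.elem (ν x) x)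
        = ENNReal.ofReal (l * (μ (F.elem (ν x) x)).toReal) := by
          rw [ENNReal.ofReal_mul hl.le, ENNReal.ofReal_toReal hfin]
      _ ≤ ENNReal.ofReal (∫ y in F.elem (ν x) x, g y ∂μ) :=
          ENNReal.ofReal_le_ofReal h2.le
      _ = ∫⁻ y in F.elem (ν x) x, ENNReal.ofReal (g y) ∂μ :=
          ofReal_integral_eq_lintegral_ofReal hgint.integrableOn
            (Eventually.of_forall hgnn)
      _ = ∫⁻ y in F.elem (ν x) x, (‖f y‖₊ : ℝ≥0∞) ∂μ :=
          lintegral_congr fun y => (Real.enorm_eq_ofReal_abs (f y)).symm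
  have hord : ∀ x ∈ E, ∀ x' ∈ E, ν x' ≤ ν x →
      ¬ Disjoint (F.elem (ν x) x) (F.elem (ν x') x') →
      F.elem (ν x) x = F.elem (ν x') x' := by
    intro x hx x' hx' hle hnd
    rw [Set.not_disjoint_iff] at hnd
    obtain ⟨z, hz, hz'⟩ := hnd
    have e1 : F.elem (ν x) z = F.elem (ν x) x := F.elem_eq (F.elem_mem _ x).1 hz
    have e2 : F.elem (ν x') z = F.elem (ν x') x' := F.elem_eq (F.elem_mem _ x').1 hz'
    have hsub : F.elem (ν x) x ⊆ F.elem (ν x') x' := by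
      rw [← e1, ← e2]
      exact F.elem_subset_s12 hle z
    have hxmem : x ∈ F.elem (ν x') x' := hsub (F.elem_mem _ x).2
    have e3 : F.elem (ν x') x = F.elem (ν x') x' := F.elem_eq (F.elem_mem _ x').1 hxmem
    have h4 : l < a (ν x') x := by
      rw [hconst (ν x') x' x hxmem]
      exact (hν x' hx').1
    have h5 : ν x ≤ ν x' := (hν x hx).2 _ h4
    rw [le_antisymm h5 hle, e3]
  have hdisj : 𝒞.PairwiseDisjoint id := by
    rintro C ⟨x, hx, rfl⟩ C' ⟨x', hx', rfl⟩ hne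
    rcases le_total (ν x') (ν x) with hle | hle
    · by_contra hnd
      exact hne (hord x hx x' hx' hle hnd)
    · by_contra hnd
      exact hne ((hord x' hx' x hx hle fun hd => hnd hd.symm).symm)
  have hcover : E = ⋃ C : 𝒞, (C : Set Ω) := by
    apply Set.Subset.antisymm
    · intro x hx
      exact Set.mem_iUnion.2 ⟨⟨F.elem (ν x) x, ⟨x, hx, rfl⟩⟩, (F.elem_mem _ x).2⟩
    · intro y hy
      obtain ⟨C, hyC⟩ := Set.mem_iUnion.1 hy
      exact hCsub C C.2 hyC
  haveI : Countable 𝒞 := hCcount.to_subtype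
  have hpair : Pairwise (Function.onFun Disjoint fun C : 𝒞 => (C : Set Ω)) := by
    intro C C' hne
    exact hdisj C.2 C'.2 (Subtype.coe_injective.ne hne)
  have hmeas' : ∀ C : 𝒞, MeasurableSet (C : Set Ω) := fun C => hCmeas C C.2
  calc ENNReal.ofReal l * μ E
      = ENNReal.ofReal l * ∑' C : 𝒞, μ (C : Set Ω) := by
        rw [hcover, measure_iUnion hpair hmeas']
    _ = ∑' C : 𝒞, ENNReal.ofReal l * μ (C : Set Ω) := ENNReal.tsum_mul_left.symm
    _ ≤ ∑' C : 𝒞, ∫⁻ x in (C : Set Ω), (‖f x‖₊ : ℝ≥0∞) ∂μ :=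
        ENNReal.tsum_le_tsum fun C => hkey C C.2
    _ = ∫⁻ x in E, (‖f x‖₊ : ℝ≥0∞) ∂μ := by rw [hcover, lintegral_iUnion hmeas' hpair]

lemma main_bound [SigmaFinite μ] (f : Ω → ℝ) (hf : Integrable f μ) (hfm : Measurable f)
    {p : ℝ} (hp : 1 < p) :
    (∫⁻ x, F.maximal (fun y => |f y|) x ^ p ∂μ) ^ (1 / p) ≤
      ENNReal.ofReal (p / (p - 1)) * (∫⁻ x, (‖f x‖₊ : ℝ≥0∞) ^ p ∂μ) ^ (1 / p) := by
  have hp0 : 0 < p := lt_trans one_pos hp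
  have hp1 : 0 < p - 1 := by linarith
  have hq : p.HolderConjugate (p / (p - 1)) := Real.HolderConjugate.conjExponent hp
  set c : ℝ≥0∞ := ENNReal.ofReal (p / (p - 1)) with hc
  set G : Ω → ℝ≥0∞ := fun x => (‖f x‖₊ : ℝ≥0∞) with hG
  have hGm : Measurable G := hfm.nnnorm.coe_nnreal_ennreal
  have hGfin : ∀ x, G x ≠ ⊤ := fun x => ENNReal.coe_ne_top
  set M : Ω → ℝ≥0∞ := F.maximal (fun y => |f y|) with hM
  have hMm : Measurable M := F.measurable_maximal _
  set Ap : ℝ≥0∞ := (∫⁻ x, G x ^ p ∂μ) ^ (1 / p) with hAp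
  have hL : ∫⁻ x, G x ∂μ < ⊤ := hf.2
  -- the per-truncation bound
  have claim : ∀ K : ℝ, 0 < K →
      (∫⁻ x, (min (M x) (ENNReal.ofReal K)) ^ p ∂μ) ^ (1 / p) ≤ c * Ap := by
    intro K hK
    set mK : Ω → ℝ := fun x => (min (M x) (ENNReal.ofReal K)).toReal with hmK
    have hmKtop : ∀ x, min (M x) (ENNReal.ofReal K) ≠ ⊤ := fun x =>
      (lt_of_le_of_lt (min_le_right _ _) ENNReal.ofReal_lt_top).ne
    have hmKofReal : ∀ x, ENNReal.ofReal (mK x) = min (M x) (ENNReal.ofReal K) := fun x =>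
      ENNReal.ofReal_toReal (hmKtop x)
    have hmKnn : ∀ x, 0 ≤ mK x := fun x => ENNReal.toReal_nonneg
    have hmKm : Measurable mK := (hMm.min measurable_const).ennreal_toReal
    set Jm : ℝ≥0∞ := ∫⁻ x, (min (M x) (ENNReal.ofReal K)) ^ p ∂μ with hJm
    have hJ1 : Jm = ∫⁻ x, ENNReal.ofReal (mK x ^ p) ∂μ := by
      refine lintegral_congr fun x => ?_
      rw [← hmKofReal x, ENNReal.ofReal_rpow_of_nonneg (hmKnn x) hp0.le]
    -- layer cake
    have hlc : Jm = ENNReal.ofReal p *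
        ∫⁻ t in Set.Ioi (0:ℝ), μ {a | t < mK a} * ENNReal.ofReal (t ^ (p - 1)) := by
      rw [hJ1]
      exact lintegral_rpow_eq_lintegral_meas_lt_mul μ (Eventually.of_forall hmKnn)
        hmKm.aemeasurable hp0
    -- pointwise bound on the tail integrand
    have hptb : ∀ t ∈ Set.Ioi (0:ℝ),
        μ {a | t < mK a} * ENNReal.ofReal (t ^ (p - 1)) ≤
          Set.indicator (Set.Ioo 0 K) (fun t => ENNReal.ofReal (t ^ (p - 2)) *
            ∫⁻ x in {a | ENNReal.ofReal t < M a}, G x ∂μ) t := by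
      intro t ht
      have ht0 : (0:ℝ) < t := ht
      by_cases htK : t < K
      · rw [Set.indicator_of_mem (Set.mem_Ioo.2 ⟨ht0, htK⟩)]
        have hsub : {a | t < mK a} ⊆ {a | ENNReal.ofReal t < M a} := by
          intro a ha
          have h1 : ENNReal.ofReal t < min (M a) (ENNReal.ofReal K) := by
            rw [← hmKofReal a]
            exact (ENNReal.ofReal_lt_ofReal_iff_of_nonneg ht0.le).2 ha
          exact lt_of_lt_of_le h1 (min_le_left _ _)
        have hw := F.weak_ineq f hf ht0
        have hsplit : ENNReal.ofReal (t ^ (p - 1)) =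
            ENNReal.ofReal (t ^ (p - 2)) * ENNReal.ofReal t := by
          rw [← ENNReal.ofReal_mul (Real.rpow_nonneg ht0.le _)]
          congr 1
          rw [← Real.rpow_add_one ht0.ne' (p - 2)]
          congr 1
          ring
        calc μ {a | t < mK a} * ENNReal.ofReal (t ^ (p - 1))
            ≤ μ {a | ENNReal.ofReal t < M a} *
                (ENNReal.ofReal (t ^ (p - 2)) * ENNReal.ofReal t) :=
              mul_le_mul' (measure_mono hsub) (le_of_eq hsplit)
          _ = ENNReal.ofReal (t ^ (p - 2)) *
                (ENNReal.ofReal t * μ {a | ENNReal.ofReal t < M a}) := by ring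
          _ ≤ ENNReal.ofReal (t ^ (p - 2)) *
                ∫⁻ x in {a | ENNReal.ofReal t < M a}, G x ∂μ := mul_le_mul_right hw _
      · rw [Set.indicator_of_notMem (fun hmem => htK (Set.mem_Ioo.1 hmem).2)]
        have hempty : {a | t < mK a} = ∅ := by
          ext a
          simp only [Set.mem_setOf_eq, Set.mem_empty_iff_false, iff_false, not_lt]
          have h1 : mK a ≤ K := by
            have := ENNReal.toReal_mono ENNReal.ofReal_ne_top (min_le_right (M a) (ENNReal.ofReal K))
            rwa [ENNReal.toReal_ofReal hK.le] at this
          exact h1.trans (not_lt.1 htK)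
        rw [hempty, measure_empty, zero_mul]
    -- the elementary integral
    have hIoo : ∀ T : ℝ, 0 ≤ T →
        (∫⁻ t in Set.Ioo 0 T, ENNReal.ofReal (t ^ (p - 2))) =
          ENNReal.ofReal (T ^ (p - 1) / (p - 1)) := by
      intro T hT
      have hint : IntegrableOn (fun t => t ^ (p - 2)) (Set.Ioo 0 T) := by
        have h1 : IntervalIntegrable (fun t : ℝ => t ^ (p - 2)) volume 0 T :=
          intervalIntegral.intervalIntegrable_rpow' (by linarith)
        exact h1.1.mono_set Set.Ioo_subset_Ioc_self
      rw [← ofReal_integral_eq_lintegral_ofReal hint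
        ((ae_restrict_iff' measurableSet_Ioo).2 (Eventually.of_forall fun t ht =>
          Real.rpow_nonneg ht.1.le _))]
      congr 1
      rw [← integral_Ioc_eq_integral_Ioo, ← intervalIntegral.integral_of_le hT,
        integral_rpow (Or.inl (by linarith : (-1:ℝ) < p - 2))]
      have h2 : p - 2 + 1 = p - 1 := by ring
      rw [h2, Real.zero_rpow hp1.ne', sub_zero]
    -- product function for Tonelli
    set A : Set (ℝ × Ω) := {q | ENNReal.ofReal q.1 < M q.2} with hA
    have hAm : MeasurableSet A :=
      measurableSet_lt (ENNReal.measurable_ofReal.comp measurable_fst) (hMm.comp measurable_snd)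
    set H : ℝ × Ω → ℝ≥0∞ := fun q =>
      ENNReal.ofReal (q.1 ^ (p - 2)) * A.indicator (fun q => G q.2) q with hH
    have hHm : Measurable H := by
      apply Measurable.mul
      · exact (measurable_fst.pow measurable_const).ennreal_ofReal
      · exact (hGm.comp measurable_snd).indicator hAm
    have hEt : ∀ t : ℝ, (∫⁻ x, H (t, x) ∂μ) =
        ENNReal.ofReal (t ^ (p - 2)) * ∫⁻ x in {a | ENNReal.ofReal t < M a}, G x ∂μ := by
      intro t
      rw [hH]
      simp only []
      rw [lintegral_const_mul' _ _ ENNReal.ofReal_ne_top]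
      congr 1
      have hind : ∀ x, A.indicator (fun q : ℝ × Ω => G q.2) (t, x) =
          Set.indicator {a | ENNReal.ofReal t < M a} G x := by
        intro x
        by_cases hx : ENNReal.ofReal t < M x
        · rw [Set.indicator_of_mem (by exact hx : (t, x) ∈ A),
            Set.indicator_of_mem (by exact hx)]
        · rw [Set.indicator_of_notMem (by exact hx : ¬ (t, x) ∈ A),
            Set.indicator_of_notMem (by exact hx)]
      rw [lintegral_congr hind, lintegral_indicator (measurableSet_lt measurable_const hMm)]
    have hinner : ∀ x, (∫⁻ t in Set.Ioo 0 K, H (t, x)) =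
        ENNReal.ofReal (mK x ^ (p - 1) / (p - 1)) * G x := by
      intro x
      have hSm : MeasurableSet {t : ℝ | ENNReal.ofReal t < M x} :=
        ENNReal.measurable_ofReal measurableSet_Iio
      have hfun : ∀ t : ℝ, H (t, x) =
          Set.indicator {t : ℝ | ENNReal.ofReal t < M x}
            (fun t => ENNReal.ofReal (t ^ (p - 2)) * G x) t := by
        intro t
        by_cases hx : ENNReal.ofReal t < M x
        · rw [Set.indicator_of_mem (by exact hx), hH]
          simp only []
          rw [Set.indicator_of_mem (by exact hx : (t, x) ∈ A)]
        · rw [Set.indicator_of_notMem (by exact hx), hH]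
          simp only []
          rw [Set.indicator_of_notMem (by exact hx : ¬ (t, x) ∈ A), mul_zero]
      rw [lintegral_congr hfun, lintegral_indicator hSm,
        Measure.restrict_restrict hSm]
      have hseteq : {t : ℝ | ENNReal.ofReal t < M x} ∩ Set.Ioo 0 K = Set.Ioo 0 (mK x) := by
        ext t
        simp only [Set.mem_inter_iff, Set.mem_setOf_eq, Set.mem_Ioo]
        constructor
        · rintro ⟨h1, h2, h3⟩
          refine ⟨h2, ?_⟩
          have h4 : ENNReal.ofReal t < min (M x) (ENNReal.ofReal K) :=
            lt_min h1 ((ENNReal.ofReal_lt_ofReal_iff hK).2 h3)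
          rw [← hmKofReal x] at h4
          exact (ENNReal.ofReal_lt_ofReal_iff_of_nonneg h2.le).1 h4
        · rintro ⟨h2, h3⟩
          have h4 : ENNReal.ofReal t < min (M x) (ENNReal.ofReal K) := by
            rw [← hmKofReal x]
            exact (ENNReal.ofReal_lt_ofReal_iff_of_nonneg h2.le).2 h3
          have h5 : t < K := by
            have := lt_of_lt_of_le h4 (min_le_right _ _)
            exact (ENNReal.ofReal_lt_ofReal_iff hK).1 this
          exact ⟨lt_of_lt_of_le h4 (min_le_left _ _), h2, h5⟩
      rw [hseteq, lintegral_mul_const' _ _ (hGfin x), hIoo _ (hmKnn x)]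
    -- Tonelli
    have hswap : (∫⁻ t in Set.Ioo 0 K, ∫⁻ x, H (t, x) ∂μ) =
        ∫⁻ x, (∫⁻ t in Set.Ioo 0 K, H (t, x)) ∂μ :=
      lintegral_lintegral_swap hHm.aemeasurable
    -- main chain
    have hmain : Jm ≤ ENNReal.ofReal p *
        ∫⁻ x, ENNReal.ofReal (mK x ^ (p - 1) / (p - 1)) * G x ∂μ := by
      rw [hlc]
      refine mul_le_mul_right ?_ _
      calc (∫⁻ t in Set.Ioi (0:ℝ), μ {a | t < mK a} * ENNReal.ofReal (t ^ (p - 1)))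
          ≤ ∫⁻ t in Set.Ioi (0:ℝ), Set.indicator (Set.Ioo 0 K)
              (fun t => ENNReal.ofReal (t ^ (p - 2)) *
                ∫⁻ x in {a | ENNReal.ofReal t < M a}, G x ∂μ) t :=
            setLIntegral_mono' measurableSet_Ioi hptb
        _ = ∫⁻ t in Set.Ioo 0 K, ENNReal.ofReal (t ^ (p - 2)) *
              ∫⁻ x in {a | ENNReal.ofReal t < M a}, G x ∂μ := by
            rw [lintegral_indicator measurableSet_Ioo,
              Measure.restrict_restrict measurableSet_Ioo,
              Set.inter_eq_self_of_subset_left (fun t ht => ht.1)]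
        _ = ∫⁻ t in Set.Ioo 0 K, ∫⁻ x, H (t, x) ∂μ :=
            lintegral_congr fun t => (hEt t).symm
        _ = ∫⁻ x, (∫⁻ t in Set.Ioo 0 K, H (t, x)) ∂μ := hswap
        _ = ∫⁻ x, ENNReal.ofReal (mK x ^ (p - 1) / (p - 1)) * G x ∂μ :=
            lintegral_congr hinner
    -- finiteness
    have hfin : Jm ≠ ⊤ := by
      rw [hlc]
      have hb : (∫⁻ t in Set.Ioi (0:ℝ), μ {a | t < mK a} * ENNReal.ofReal (t ^ (p - 1)))
          ≤ (∫⁻ t in Set.Ioo 0 K, ENNReal.ofReal (t ^ (p - 2))) * ∫⁻ x, G x ∂μ := by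
        calc (∫⁻ t in Set.Ioi (0:ℝ), μ {a | t < mK a} * ENNReal.ofReal (t ^ (p - 1)))
            ≤ ∫⁻ t in Set.Ioo 0 K, ENNReal.ofReal (t ^ (p - 2)) *
                ∫⁻ x in {a | ENNReal.ofReal t < M a}, G x ∂μ := by
              refine (setLIntegral_mono' measurableSet_Ioi hptb).trans (le_of_eq ?_)
              rw [lintegral_indicator measurableSet_Ioo,
                Measure.restrict_restrict measurableSet_Ioo,
                Set.inter_eq_self_of_subset_left (fun t ht => ht.1)]
          _ ≤ ∫⁻ t in Set.Ioo 0 K, ENNReal.ofReal (t ^ (p - 2)) * ∫⁻ x, G x ∂μ :=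
              lintegral_mono fun t => mul_le_mul_right (setLIntegral_le_lintegral _ _) _
          _ = _ := by
              rw [lintegral_mul_const'' _ (((measurable_id'.pow measurable_const).ennreal_ofReal.aemeasurable : AEMeasurable (fun t : ℝ => ENNReal.ofReal (t ^ (p - 2))) _))]
      refine (ENNReal.mul_lt_top ENNReal.ofReal_lt_top (lt_of_le_of_lt hb ?_)).ne
      rw [hIoo K hK.le]
      exact ENNReal.mul_lt_top ENNReal.ofReal_lt_top hL
    -- rearrange constants
    have hmain2 : Jm ≤ c * ∫⁻ x, G x * ENNReal.ofReal (mK x ^ (p - 1)) ∂μ := by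
      refine hmain.trans (le_of_eq ?_)
      have h1 : ∀ x, ENNReal.ofReal (mK x ^ (p - 1) / (p - 1)) * G x =
          ENNReal.ofReal (1 / (p - 1)) * (G x * ENNReal.ofReal (mK x ^ (p - 1))) := by
        intro x
        rw [div_eq_mul_one_div, ENNReal.ofReal_mul (Real.rpow_nonneg (hmKnn x) _)]
        ring
      rw [lintegral_congr h1, lintegral_const_mul' _ _ ENNReal.ofReal_ne_top,
        ← mul_assoc, ← ENNReal.ofReal_mul hp0.le, hc]
      congr 2
      field_simp
    -- Hölder
    have hHolder : (∫⁻ x, G x * ENNReal.ofReal (mK x ^ (p - 1)) ∂μ) ≤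
        Ap * Jm ^ (1 / (p / (p - 1))) := by
      have h := ENNReal.lintegral_mul_le_Lp_mul_Lq (g := fun x => ENNReal.ofReal (mK x ^ (p - 1))) μ hq hGm.aemeasurable
        ((hmKm.pow measurable_const).ennreal_ofReal.aemeasurable)
      refine h.trans (le_of_eq ?_)
      have hx : (∫⁻ x, ENNReal.ofReal (mK x ^ (p - 1)) ^ (p / (p - 1)) ∂μ) = Jm := by
        rw [hJ1]
        refine lintegral_congr fun x => ?_
        rw [ENNReal.ofReal_rpow_of_nonneg (Real.rpow_nonneg (hmKnn x) _) (by positivity),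
          ← Real.rpow_mul (hmKnn x), hq.sub_one_mul_conj]
      beta_reduce
      rw [hx, hAp]
    -- combine
    have hstep : Jm ≤ (c * Ap) * Jm ^ (1 / (p / (p - 1))) := by
      refine hmain2.trans ?_
      rw [mul_assoc]
      exact mul_le_mul_right hHolder _
    rcases eq_or_ne Jm 0 with h0 | h0
    · rw [h0, ENNReal.zero_rpow_of_pos (by positivity)]
      exact zero_le
    · have hne : Jm ^ (1 / (p / (p - 1))) ≠ 0 := by
        simp only [ne_eq, ENNReal.rpow_eq_zero_iff, not_or, not_and]
        exact ⟨fun h _ => h0 h, fun h => absurd h hfin⟩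
      have hne' : Jm ^ (1 / (p / (p - 1))) ≠ ⊤ :=
        ENNReal.rpow_ne_top_of_nonneg (by positivity) hfin
      have hJsplit : Jm ^ (1 / p) * Jm ^ (1 / (p / (p - 1))) = Jm := by
        rw [← ENNReal.rpow_add _ _ h0 hfin]
        rw [one_div, one_div, hq.inv_add_inv_eq_one, ENNReal.rpow_one]
      refine (ENNReal.mul_le_mul_iff_left hne hne').1 ?_
      rw [hJsplit]
      exact hstep
  -- pass to the supremum
  have hsup : ∀ x, M x ^ p = ⨆ k : ℕ, (min (M x) (ENNReal.ofReal ((k:ℝ) + 1))) ^ p := by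
    intro x
    have hmono : Monotone fun k : ℕ => min (M x) (ENNReal.ofReal ((k:ℝ) + 1)) := by
      intro i j hij
      refine min_le_min le_rfl (ENNReal.ofReal_le_ofReal ?_)
      have : (i:ℝ) ≤ (j:ℝ) := Nat.cast_le.2 hij
      linarith
    have h1 : (⨆ k : ℕ, min (M x) (ENNReal.ofReal ((k:ℝ) + 1))) = M x := by
      refine le_antisymm (iSup_le fun k => min_le_left _ _) ?_
      rcases eq_or_ne (M x) ⊤ with htop | htop
      · rw [htop]
        have hmt : ∀ k : ℕ, min (⊤:ℝ≥0∞) (ENNReal.ofReal ((k:ℝ) + 1)) =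
            ENNReal.ofReal ((k:ℝ) + 1) := fun k => min_eq_right le_top
        rw [iSup_congr hmt, top_le_iff, iSup_eq_top]
        intro b hb
        obtain ⟨k, hk⟩ := exists_nat_gt b.toReal
        refine ⟨k, ?_⟩
        rw [ENNReal.lt_ofReal_iff_toReal_lt hb.ne]
        linarith
      · obtain ⟨k, hk⟩ := exists_nat_gt ((M x).toReal)
        refine le_iSup_of_le k (le_min le_rfl ?_)
        rw [ENNReal.le_ofReal_iff_toReal_le htop (by positivity)]
        linarith
    have h2 : Tendsto (fun k : ℕ => min (M x) (ENNReal.ofReal ((k:ℝ) + 1))) atTop (𝓝 (M x)) := by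
      have h2' := tendsto_atTop_iSup hmono
      rwa [h1] at h2'
    have h3 : Tendsto (fun k : ℕ => (min (M x) (ENNReal.ofReal ((k:ℝ) + 1))) ^ p) atTop
        (𝓝 (M x ^ p)) := (ENNReal.continuous_rpow_const.tendsto _).comp h2
    have h4 : Monotone fun k : ℕ => (min (M x) (ENNReal.ofReal ((k:ℝ) + 1))) ^ p :=
      fun i j hij => ENNReal.rpow_le_rpow (hmono hij) hp0.le
    exact tendsto_nhds_unique h3 (tendsto_atTop_iSup h4)
  have hmeas : ∀ k : ℕ, Measurable fun x => (min (M x) (ENNReal.ofReal ((k:ℝ) + 1))) ^ p :=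
    fun k => ENNReal.continuous_rpow_const.measurable.comp (hMm.min measurable_const)
  have hmono' : Monotone fun (k : ℕ) (x : Ω) => (min (M x) (ENNReal.ofReal ((k:ℝ) + 1))) ^ p := by
    intro i j hij x
    refine ENNReal.rpow_le_rpow (min_le_min le_rfl (ENNReal.ofReal_le_ofReal ?_)) hp0.le
    have : (i:ℝ) ≤ (j:ℝ) := Nat.cast_le.2 hij
    linarith
  have hlint : (∫⁻ x, M x ^ p ∂μ) =
      ⨆ k : ℕ, ∫⁻ x, (min (M x) (ENNReal.ofReal ((k:ℝ) + 1))) ^ p ∂μ := by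
    rw [← lintegral_iSup hmeas hmono']
    exact lintegral_congr hsup
  have hperK : ∀ k : ℕ, (∫⁻ x, (min (M x) (ENNReal.ofReal ((k:ℝ) + 1))) ^ p ∂μ) ≤
      (c * Ap) ^ p := by
    intro k
    have h1 := claim ((k:ℝ) + 1) (by positivity)
    have h2 : (∫⁻ x, (min (M x) (ENNReal.ofReal ((k:ℝ) + 1))) ^ p ∂μ) =
        ((∫⁻ x, (min (M x) (ENNReal.ofReal ((k:ℝ) + 1))) ^ p ∂μ) ^ (1 / p)) ^ p := by
      rw [← ENNReal.rpow_mul, one_div, inv_mul_cancel₀ hp0.ne', ENNReal.rpow_one]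
    rw [h2]
    exact ENNReal.rpow_le_rpow h1 hp0.le
  rw [hlint]
  refine le_trans (ENNReal.rpow_le_rpow (iSup_le hperK) (by positivity)) ?_
  rw [← ENNReal.rpow_mul, mul_one_div_cancel hp0.ne', ENNReal.rpow_one]

end FiltrationOfPartitions

theorem stmt12 {Ω : Type} [MeasurableSpace Ω] (μ : Measure Ω) [SigmaFinite μ]
    (N₀ : ℝ) (hN₀ : 1 ≤ N₀) (F : FiltrationOfPartitions Ω μ N₀)
    (f : Ω → ℝ) (hf : Integrable f μ) (p : ℝ) (hp : 1 < p) :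
    (∫⁻ x, F.maximal (fun y => |f y|) x ^ p ∂μ) ^ (1 / p) ≤
      ENNReal.ofReal (p / (p - 1)) * eLpNorm f (ENNReal.ofReal p) μ := by
  have hp0 : 0 < p := lt_trans one_pos hp
  obtain ⟨f₀, hf₀m, hff₀⟩ : ∃ f₀ : Ω → ℝ, Measurable f₀ ∧ f =ᵐ[μ] f₀ :=
    ⟨hf.1.mk f, hf.1.stronglyMeasurable_mk.measurable, hf.1.ae_eq_mk⟩
  have hf₀ : Integrable f₀ μ := hf.congr hff₀
  have hmax : F.maximal (fun y => |f y|) = F.maximal (fun y => |f₀ y|) := by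
    funext x
    simp only [FiltrationOfPartitions.maximal]
    congr 1
    funext n
    congr 1
    exact average_congr (ae_restrict_of_ae (hff₀.mono fun y hy => by simp only [hy]))
  rw [hmax, eLpNorm_congr_ae hff₀]
  refine (F.main_bound f₀ hf₀ hf₀m hp).trans (le_of_eq ?_)
  congr 1
  rw [eLpNorm_eq_lintegral_rpow_enorm_toReal (ENNReal.ofReal_pos.2 hp0).ne' ENNReal.ofReal_ne_top,
    ENNReal.toReal_ofReal hp0.le]
  rfl
end
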